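/- arXiv:1306.1624 — 7 statements merged into one kernel-verified Lean document; each statement's English description precedes it below -/
import Mathlib

section
/- Let π : E → X be a surjective covering map between topological spaces, where E is simply connected and locally path-connected and X is locally path-connected. Fix p₀ ∈ E. Then the group of deck transformations of π, i.e. the group (under composition) of homeomorphisms φ : E ≃ E satisfying π ∘ φ = π, is isomorphic as a group to the fundamental group π₁(X, π(p₀)). -/
open Set Topology unitInterval

noncomputable section

namespace DeckAux

variable {E X : Type*} [TopologicalSpace E] [TopologicalSpace X] {π : E → X}
  [∀ x : X, Nonempty (π ⁻¹' {x})]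

theorem isPreconnected_Icc_I (a b : I) : IsPreconnected (Set.Icc a b) := by
  rw [← IsInducing.subtypeVal.isPreconnected_image]
  have : (Subtype.val '' Set.Icc a b) = Set.Icc (a:ℝ) (b:ℝ) := by
    ext x; constructor
    · rintro ⟨y, hy, rfl⟩; exact ⟨Subtype.coe_le_coe.2 hy.1, Subtype.coe_le_coe.2 hy.2⟩
    · rintro ⟨h1, h2⟩
      exact ⟨⟨x, ⟨a.2.1.trans h1, h2.trans b.2.2⟩⟩, ⟨h1, h2⟩, rfl⟩
  rw [this]; exact isPreconnected_Icc

theorem isClosed_Icc_I (a b : I) : IsClosed (Set.Icc a b) := by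
  have : (Set.Icc a b) = Subtype.val ⁻¹' (Set.Icc (a:ℝ) (b:ℝ)) := by
    ext x; simp [Subtype.coe_le_coe]
  rw [this]; exact isClosed_Icc.preimage continuous_subtype_val

theorem isClosed_le_I (a : I) : IsClosed {s : I | s ≤ a} := by
  have : {s : I | s ≤ a} = Subtype.val ⁻¹' (Set.Iic (a:ℝ)) := by
    ext x; simp [Subtype.coe_le_coe]
  rw [this]; exact isClosed_Iic.preimage continuous_subtype_val

theorem isClosed_ge_I (a : I) : IsClosed {s : I | a ≤ s} := by
  have : {s : I | a ≤ s} = Subtype.val ⁻¹' (Set.Ici (a:ℝ)) := by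
    ext x; simp [Subtype.coe_le_coe]
  rw [this]; exact isClosed_Ici.preimage continuous_subtype_val

/-- Gluing two `ContinuousOn`s. -/
theorem continuousOn_union_aux {Z W : Type*} [TopologicalSpace Z] [TopologicalSpace W]
    {f : Z → W} {s t : Set Z} (hs : ContinuousOn f s) (ht : ContinuousOn f t)
    (h₁ : ∀ p ∈ s, p ∉ t → p ∉ closure t) (h₂ : ∀ p ∈ t, p ∉ s → p ∉ closure s) :
    ContinuousOn f (s ∪ t) := by
  intro p hp
  apply continuousWithinAt_union.2
  constructor
  · by_cases h : p ∈ s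
    · exact hs p h
    · exact continuousWithinAt_of_notMem_closure (h₂ p (hp.resolve_left h) h)
  · by_cases h : p ∈ t
    · exact ht p h
    · exact continuousWithinAt_of_notMem_closure (h₁ p (hp.resolve_right h) h)

/-- Existence of path lifts for covering maps. -/
theorem exists_lift (hπ : IsCoveringMap π) (γ : C(I, X)) (e : E) (he : γ 0 = π e) :
    ∃ Γ : C(I, E), π ∘ ⇑Γ = ⇑γ ∧ Γ 0 = e := by
  obtain ⟨t, ht0, htmono, ⟨N, htN⟩, hcov⟩ :=
    exists_monotone_Icc_subset_open_cover_unitInterval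
      (c := fun s : I => ⇑γ ⁻¹' (hπ (γ s)).toTrivialization.baseSet)
      (fun s => ((hπ (γ s)).toTrivialization.open_baseSet).preimage γ.continuous)
      (fun s _ => mem_iUnion.2 ⟨s, (hπ (γ s)).mem_toTrivialization_baseSet⟩)
  have key : ∀ n : ℕ, ∃ Γ : C(I, E), (∀ s, π (Γ s) = γ (min s (t n))) ∧ Γ 0 = e := by
    intro n
    induction n with
    | zero =>
      refine ⟨ContinuousMap.const I e, fun s => ?_, rfl⟩
      have h0 : s ⊓ (0:I) = (0:I) := inf_eq_right.2 s.2.1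
      rw [ht0, h0, he]
      rfl
    | succ n ih =>
      obtain ⟨Γ, hΓ, hΓ0⟩ := ih
      obtain ⟨i, hsub⟩ := hcov n
      set T := (hπ (γ i)).toTrivialization with hT
      have htn : t n ∈ Set.Icc (t n) (t (n+1)) := ⟨le_refl _, htmono (Nat.le_succ n)⟩
      have hbase : ∀ s ∈ Set.Icc (t n) (t (n+1)), γ s ∈ T.baseSet := fun s hs => hsub hs
      have heΓ : π (Γ (t n)) = γ (t n) := by rw [hΓ, inf_idem]
      have hmem : Γ (t n) ∈ T.source := by
        rw [T.mem_source, heΓ]; exact hbase _ htn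
      set c₂ := (T (Γ (t n))).2 with hc₂
      set g : I → E := fun s =>
        T.toPartialHomeomorph.symm (γ (min (max s (t n)) (t (n+1))), c₂) with hg
      have hmm : ∀ s : I, min (max s (t n)) (t (n+1)) ∈ Set.Icc (t n) (t (n+1)) := fun s =>
        ⟨le_min (le_max_right _ _) htn.2, min_le_right _ _⟩
      have htarget : ∀ s : I, (γ (min (max s (t n)) (t (n+1))), c₂) ∈ T.target := by
        intro s
        rw [T.target_eq]
        exact ⟨hbase _ (hmm s), trivial⟩
      have hgcont : Continuous g := by
        apply T.toPartialHomeomorph.continuousOn_symm.comp_continuous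
        · exact (γ.continuous.comp (((continuous_id.max continuous_const).min
            continuous_const))).prodMk continuous_const
        · exact htarget
      have hglift : ∀ s : I, π (g s) = γ (min (max s (t n)) (t (n+1))) := fun s =>
        T.proj_symm_apply (htarget s)
      have hagree : Γ (t n) = g (t n) := by
        have hmin : ((t n) ⊔ (t n)) ⊓ t (n+1) = t n := by rw [sup_idem]; exact inf_eq_left.2 htn.2
        have h1 : (γ (((t n) ⊔ (t n)) ⊓ t (n+1)), c₂) = T (Γ (t n)) := by
          rw [hmin]
          exact Prod.ext (by rw [T.coe_fst hmem, heΓ]) rfl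
        show Γ (t n) = T.toPartialHomeomorph.symm _
        rw [h1, ← T.coe_coe]
        exact (T.toPartialHomeomorph.left_inv hmem).symm
      set Γ' : I → E := fun s => if s ≤ t n then Γ s else g s with hΓ'
      have hcont' : Continuous Γ' := by
        rw [← continuousOn_univ]
        have huniv : (univ : Set I) = {s : I | s ≤ t n} ∪ {s : I | t n ≤ s} := by
          ext s; simp [le_total s (t n)]
        rw [huniv]
        apply continuousOn_union_aux
        · apply (Γ.continuous.continuousOn).congr
          intro s hs
          exact if_pos hs
        · apply (hgcont.continuousOn).congr
          intro s hs
          by_cases h : s ≤ t n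
          · have hstn : s = t n := le_antisymm h hs
            show (if s ≤ t n then Γ s else g s) = g s
            rw [if_pos h, hstn]
            exact hagree
          · exact if_neg h
        · intro p _ hp hcl
          exact hp ((isClosed_ge_I (t n)).closure_subset hcl)
        · intro p _ hp hcl
          exact hp ((isClosed_le_I (t n)).closure_subset hcl)
      refine ⟨⟨Γ', hcont'⟩, fun s => ?_, ?_⟩
      · by_cases h : s ≤ t n
        · show π (if s ≤ t n then Γ s else g s) = _
          rw [if_pos h, hΓ, inf_eq_left.2 h, inf_eq_left.2 (h.trans htn.2)]
        · show π (if s ≤ t n then Γ s else g s) = _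
          rw [if_neg h, hglift, sup_eq_left.2 (le_of_not_ge h)]
      · show (if (0:I) ≤ t n then Γ 0 else g 0) = e
        have h0n : (0:I) ≤ t n := (t n).2.1
        rw [if_pos h0n, hΓ0]
  obtain ⟨Γ, hΓ, hΓ0⟩ := key N
  refine ⟨Γ, funext fun s => ?_, hΓ0⟩
  show π (Γ s) = γ s
  rw [hΓ, htN N (le_refl N), inf_eq_left.2 (le_one' : s ≤ 1)]
open Classical in
/-- The canonical path lift (junk value if basepoint doesn't match). -/
def liftPath (hπ : IsCoveringMap π) (γ : C(I, X)) (e : E) : C(I, E) :=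
  if h : γ 0 = π e then (exists_lift hπ γ e h).choose else ContinuousMap.const I e

theorem liftPath_lifts (hπ : IsCoveringMap π) (γ : C(I, X)) (e : E) (h : γ 0 = π e) :
    π ∘ ⇑(liftPath hπ γ e) = ⇑γ := by
  rw [liftPath]; rw [dif_pos h]; exact (exists_lift hπ γ e h).choose_spec.1

theorem liftPath_zero (hπ : IsCoveringMap π) (γ : C(I, X)) (e : E) (h : γ 0 = π e) :
    liftPath hπ γ e 0 = e := by
  rw [liftPath]; rw [dif_pos h]; exact (exists_lift hπ γ e h).choose_spec.2

theorem liftPath_unique (hπ : IsCoveringMap π) (γ : C(I, X)) (e : E) (h : γ 0 = π e)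
    {Γ : C(I, E)} (hl : π ∘ ⇑Γ = ⇑γ) (h0 : Γ 0 = e) : ⇑Γ = ⇑(liftPath hπ γ e) :=
  hπ.eq_of_comp_eq Γ.continuous (liftPath hπ γ e).continuous
    (by rw [hl, liftPath_lifts hπ γ e h]) 0 (by rw [h0, liftPath_zero hπ γ e h])

theorem liftPath_lift_apply (hπ : IsCoveringMap π) (γ : C(I, X)) (e : E) (h : γ 0 = π e) (s : I) :
    π (liftPath hπ γ e s) = γ s := congrFun (liftPath_lifts hπ γ e h) s

/-- Continuity of lifts in a parameter: the key ingredient for homotopy lifting. -/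
theorem continuous_liftPath_param (hπ : IsCoveringMap π) (H : C(I × I, X)) (e : E)
    (he : ∀ t, H (t, 0) = π e) :
    Continuous fun p : I × I => liftPath hπ (H.curry p.1) e p.2 := by
  set Γ : I × I → E := fun p => liftPath hπ (H.curry p.1) e p.2 with hΓdef
  have hcond : ∀ t : I, (H.curry t) 0 = π e := fun t => he t
  have hΓlift : ∀ (t s : I), π (Γ (t, s)) = H (t, s) := fun t s =>
    liftPath_lift_apply hπ (H.curry t) e (hcond t) s
  have hΓ0 : ∀ t : I, Γ (t, 0) = e := fun t => liftPath_zero hπ (H.curry t) e (hcond t)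
  rw [continuous_iff_continuousAt]
  rintro ⟨t₀, s₀⟩
  -- partition of the column {t₀} × I
  obtain ⟨t, ht0, htmono, ⟨N, htN⟩, hcov⟩ :=
    exists_monotone_Icc_subset_open_cover_unitInterval
      (c := fun s : I => (fun s' : I => H (t₀, s')) ⁻¹'
          (hπ (H (t₀, s))).toTrivialization.baseSet)
      (fun s => ((hπ (H (t₀, s))).toTrivialization.open_baseSet).preimage
        (H.continuous.comp (Continuous.prodMk_right t₀)))
      (fun s _ => mem_iUnion.2 ⟨s, (hπ (H (t₀, s))).mem_toTrivialization_baseSet⟩)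
  -- tubes around each piece of the column
  have tube : ∀ n : ℕ, ∃ u : Set I, IsOpen u ∧ t₀ ∈ u ∧
      ∀ p : I × I, p.1 ∈ u → p.2 ∈ Set.Icc (t n) (t (n+1)) →
        H p ∈ (hπ (H (t₀, (hcov n).choose))).toTrivialization.baseSet := by
    intro n
    set T := (hπ (H (t₀, (hcov n).choose))).toTrivialization
    have hopen : IsOpen (⇑H ⁻¹' T.baseSet) := T.open_baseSet.preimage H.continuous
    have hsub : ({t₀} : Set I) ×ˢ Set.Icc (t n) (t (n+1)) ⊆ ⇑H ⁻¹' T.baseSet := by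
      rintro ⟨a, b⟩ ⟨ha, hb⟩
      rcases ha with rfl
      exact (hcov n).choose_spec hb
    obtain ⟨u, v, hu, _, hut, hv, huv⟩ := generalized_tube_lemma isCompact_singleton
      (isClosed_Icc_I _ _).isCompact hopen hsub
    exact ⟨u, hu, hut rfl, fun p hp1 hp2 => huv ⟨hp1, hv hp2⟩⟩
  set V : Set I := ⋂ n ∈ Finset.range N, (tube n).choose with hV
  have hVopen : IsOpen V := isOpen_biInter_finset fun n _ => (tube n).choose_spec.1
  have hVt₀ : t₀ ∈ V := mem_iInter₂.2 fun n _ => (tube n).choose_spec.2.1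
  have hVsub : ∀ n < N, ∀ p : I × I, p.1 ∈ V → p.2 ∈ Set.Icc (t n) (t (n+1)) →
      H p ∈ (hπ (H (t₀, (hcov n).choose))).toTrivialization.baseSet := fun n hn p hp1 hp2 =>
    (tube n).choose_spec.2.2 p (mem_iInter₂.1 hp1 n (Finset.mem_range.2 hn)) hp2
  -- induction up the column
  have key : ∀ n : ℕ, n ≤ N → ContinuousOn Γ (V ×ˢ Set.Icc 0 (t n)) := by
    intro n
    induction n with
    | zero =>
      intro _
      apply continuousOn_const.congr
      rintro ⟨a, b⟩ ⟨_, _, hb2⟩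
      have hb2' : b ≤ t 0 := hb2
      have hb0 : (0:I) ≤ b := b.2.1
      have hb : b = 0 := le_antisymm (ht0 ▸ hb2') hb0
      rw [hb]
      exact hΓ0 a
    | succ n ih =>
      intro hn
      have hIH := ih (Nat.le_of_succ_le hn)
      have hnN : n < N := hn
      set T := (hπ (H (t₀, (hcov n).choose))).toTrivialization with hT
      have htn1 : t n ≤ t (n+1) := htmono (Nat.le_succ n)
      have htnIcc : t n ∈ Set.Icc (t n) (t (n+1)) := ⟨le_refl _, htn1⟩
      have hrow : ContinuousOn (fun a : I => Γ (a, t n)) V := by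
        apply hIH.comp ((continuous_id.prodMk continuous_const).continuousOn)
        intro a ha
        have h0tn : (0:I) ≤ t n := (t n).2.1
        exact ⟨ha, ⟨h0tn, le_refl _⟩⟩
      have hrow_mem : ∀ a ∈ V, Γ (a, t n) ∈ T.source := by
        intro a ha
        rw [T.mem_source, hΓlift]
        exact hVsub n hnN (a, t n) ha htnIcc
      set L : I × I → E := fun p =>
        T.toPartialHomeomorph.symm (H p, (T (Γ (p.1, t n))).2) with hL
      have hLtarget : ∀ p : I × I, p.1 ∈ V → p.2 ∈ Set.Icc (t n) (t (n+1)) →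
          (H p, (T (Γ (p.1, t n))).2) ∈ T.target := by
        intro p hp1 hp2
        rw [T.target_eq]
        exact ⟨hVsub n hnN p hp1 hp2, trivial⟩
      have hsnd : ContinuousOn (fun p : I × I => (T (Γ (p.1, t n))).2)
          (V ×ˢ Set.Icc (t n) (t (n+1))) := by
        have h1 : ContinuousOn (fun p : I × I => Γ (p.1, t n))
            (V ×ˢ Set.Icc (t n) (t (n+1))) := by
          apply hrow.comp continuous_fst.continuousOn
          rintro ⟨a, b⟩ ⟨ha, _⟩
          exact ha
        have h2 : ContinuousOn (fun p : I × I => T (Γ (p.1, t n)))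
            (V ×ˢ Set.Icc (t n) (t (n+1))) := by
          apply T.continuousOn_toFun.comp h1
          rintro ⟨a, b⟩ ⟨ha, _⟩
          exact hrow_mem a ha
        exact continuous_snd.comp_continuousOn h2
      have hLcont : ContinuousOn L (V ×ˢ Set.Icc (t n) (t (n+1))) := by
        apply T.toPartialHomeomorph.continuousOn_symm.comp
          (H.continuous.continuousOn.prodMk hsnd)
        rintro ⟨a, b⟩ ⟨ha, hb⟩
        exact hLtarget (a, b) ha hb
      have hEq : Set.EqOn Γ L (V ×ˢ Set.Icc (t n) (t (n+1))) := by
        rintro ⟨a, b⟩ ⟨ha, hb⟩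
        have claim : Set.EqOn (fun s => Γ (a, s)) (fun s => L (a, s))
            (Set.Icc (t n) (t (n+1))) := by
          apply hπ.eqOn_of_comp_eqOn (isPreconnected_Icc_I _ _)
            ((liftPath hπ (H.curry a) e).continuous).continuousOn
            (hLcont.comp (Continuous.prodMk_right a).continuousOn fun s hs => ⟨ha, hs⟩)
            ?_ htnIcc ?_
          · intro s hs
            show π (Γ (a, s)) = π (L (a, s))
            rw [hΓlift]
            exact (T.proj_symm_apply (hLtarget (a, s) ha hs)).symm
          · show Γ (a, t n) = L (a, t n)
            have h1 : (H (a, t n), (T (Γ (a, t n))).2) = T (Γ (a, t n)) :=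
              Prod.ext (by rw [T.coe_fst (hrow_mem a ha), hΓlift]) rfl
            show Γ (a, t n) = T.toPartialHomeomorph.symm _
            rw [h1, ← T.coe_coe]
            exact (T.toPartialHomeomorph.left_inv (hrow_mem a ha)).symm
        exact claim hb
      have hstrip : ContinuousOn Γ (V ×ˢ Set.Icc (t n) (t (n+1))) := hLcont.congr hEq
      have hunion : V ×ˢ Set.Icc 0 (t (n+1)) ⊆
          (V ×ˢ Set.Icc 0 (t n)) ∪ (V ×ˢ Set.Icc (t n) (t (n+1))) := by
        rintro ⟨a, b⟩ ⟨ha, hb0, hb1⟩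
        by_cases h : b ≤ t n
        · exact Or.inl ⟨ha, hb0, h⟩
        · exact Or.inr ⟨ha, le_of_not_ge h, hb1⟩
      apply ContinuousOn.mono ?_ hunion
      apply continuousOn_union_aux hIH hstrip
      · rintro p hp1 hp2 hcl
        have hcl' := closure_minimal
          (Set.prod_mono (Set.subset_univ V) subset_rfl)
          (isClosed_univ.prod (isClosed_Icc_I (t n) (t (n+1)))) hcl
        exact hp2 ⟨hp1.1, hcl'.2⟩
      · rintro p hp1 hp2 hcl
        have hcl' := closure_minimal
          (Set.prod_mono (Set.subset_univ V) subset_rfl)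
          (isClosed_univ.prod (isClosed_Icc_I 0 (t n))) hcl
        exact hp2 ⟨hp1.1, hcl'.2⟩
  have hfin : ContinuousOn Γ (V ×ˢ Set.Icc 0 (t N)) := key N (le_refl N)
  have hsub2 : V ×ˢ (univ : Set I) ⊆ V ×ˢ Set.Icc 0 (t N) := by
    rintro ⟨a, b⟩ ⟨ha, _⟩
    refine ⟨ha, b.2.1, ?_⟩
    rw [htN N (le_refl N)]
    exact le_one'
  exact (hfin.mono hsub2).continuousAt (prod_mem_nhds (hVopen.mem_nhds hVt₀) Filter.univ_mem)

attribute [local instance] Path.Homotopic.setoid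

/-- Monodromy: lifts of homotopic paths starting at the same point end at the
same point. -/
theorem monodromy (hπ : IsCoveringMap π) {x y : X} {γ₀ γ₁ : Path x y}
    (h : Path.Homotopic γ₀ γ₁) (e : E) (he : x = π e)
    {Γ₀ Γ₁ : C(I, E)} (h₀ : π ∘ ⇑Γ₀ = ⇑γ₀) (h₁ : π ∘ ⇑Γ₁ = ⇑γ₁)
    (s₀ : Γ₀ 0 = e) (s₁ : Γ₁ 0 = e) : Γ₀ 1 = Γ₁ 1 := by
  obtain ⟨F⟩ := h
  set H : C(I × I, X) := F.toContinuousMap with hH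
  have h0S : (0 : I) ∈ ({0, 1} : Set I) := Set.mem_insert 0 {1}
  have h1S : (1 : I) ∈ ({0, 1} : Set I) := Set.mem_insert_of_mem 0 rfl
  have hcond : ∀ t : I, H (t, 0) = π e := by
    intro t
    have h1 : F (t, 0) = γ₀ 0 := F.eq_fst t h0S
    rw [show H (t, 0) = F (t, 0) from rfl, h1, γ₀.source, he]
  have hΓcont := continuous_liftPath_param hπ H e hcond
  set Γ : I × I → E := fun p => liftPath hπ (H.curry p.1) e p.2 with hΓ
  have hcond' : ∀ t : I, (H.curry t) 0 = π e := fun t => hcond t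
  have h01 : Γ (0, 1) = Γ (1, 1) := by
    have hv : ∀ t : I, π (Γ (t, 1)) = y := by
      intro t
      rw [hΓ]
      simp only
      rw [liftPath_lift_apply hπ _ e (hcond' t) 1]
      show F (t, 1) = y
      rw [F.eq_fst t h1S]
      exact γ₀.target
    exact hπ.const_of_comp (hΓcont.comp (continuous_id.prodMk continuous_const))
      (fun a a' => by show π (Γ (a, 1)) = π (Γ (a', 1)); rw [hv, hv]) 0 1
  have hc0 : H.curry 0 = γ₀.toContinuousMap := ContinuousMap.ext fun s => F.apply_zero s
  have hc1 : H.curry 1 = γ₁.toContinuousMap := ContinuousMap.ext fun s => F.apply_one s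
  have e₀ : ⇑Γ₀ = ⇑(liftPath hπ (H.curry 0) e) := by
    rw [hc0]
    exact liftPath_unique hπ _ e (γ₀.source.trans he) h₀ s₀
  have e₁ : ⇑Γ₁ = ⇑(liftPath hπ (H.curry 1) e) := by
    rw [hc1]
    exact liftPath_unique hπ _ e (γ₁.source.trans he) h₁ s₁
  calc Γ₀ 1 = Γ (0, 1) := congrFun e₀ 1
    _ = Γ (1, 1) := h01
    _ = Γ₁ 1 := (congrFun e₁ 1).symm

/-- Two paths in `X` that both lift to paths in a simply connected covering
space (with the same endpoints) are homotopic. -/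
theorem homotopic_of_lifts (hπ : IsCoveringMap π) [SimplyConnectedSpace E]
    {x y : X} {a b : E} (sp tp : Path x y) (sp' tp' : Path a b)
    (hsp : ⇑sp = π ∘ ⇑sp') (htp : ⇑tp = π ∘ ⇑tp') :
    (⟦sp⟧ : Path.Homotopic.Quotient x y) = ⟦tp⟧ := by
  have hx : x = π a := by
    rw [← sp.source, congrFun hsp 0]
    show π (sp' 0) = π a
    rw [sp'.source]
  have hy : y = π b := by
    rw [← sp.target, congrFun hsp 1]
    show π (sp' 1) = π b
    rw [sp'.target]
  have hspeq : sp = (sp'.map hπ.continuous).cast hx hy := by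
    ext s
    rw [Path.cast_coe]
    exact congrFun hsp s
  have htpeq : tp = (tp'.map hπ.continuous).cast hx hy := by
    ext s
    rw [Path.cast_coe]
    exact congrFun htp s
  rw [hspeq, htpeq]
  apply Quotient.sound
  have hh : Path.Homotopic (sp'.map hπ.continuous) (tp'.map hπ.continuous) :=
    Path.Homotopic.map (SimplyConnectedSpace.paths_homotopic sp' tp') ⟨π, hπ.continuous⟩
  subst hx
  subst hy
  exact hh

section Deck

variable [SimplyConnectedSpace E] [LocallyPathConnectedSpace E]

/-- The candidate deck transformation sending `p₀` to `p₁`: transport along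
lifted paths. -/
def deckFun (hπ : IsCoveringMap π) (p₀ p₁ : E) : E → E := fun q =>
  liftPath hπ ((PathConnectedSpace.somePath p₀ q).map hπ.continuous).toContinuousMap p₁ 1

theorem deckFun_spec (hπ : IsCoveringMap π) {p₀ p₁ : E} (h : π p₁ = π p₀) (q : E)
    (α : Path p₀ q) :
    deckFun hπ p₀ p₁ q = liftPath hπ (α.map hπ.continuous).toContinuousMap p₁ 1 := by
  set β := PathConnectedSpace.somePath p₀ q with hβ
  have condβ : (β.map hπ.continuous).toContinuousMap 0 = π p₁ := by
    show π (β 0) = π p₁; rw [β.source]; exact h.symm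
  have condα : (α.map hπ.continuous).toContinuousMap 0 = π p₁ := by
    show π (α 0) = π p₁; rw [α.source]; exact h.symm
  exact monodromy hπ
    (Path.Homotopic.map (SimplyConnectedSpace.paths_homotopic β α) ⟨π, hπ.continuous⟩)
    p₁ h.symm (liftPath_lifts hπ _ p₁ condβ) (liftPath_lifts hπ _ p₁ condα)
    (liftPath_zero hπ _ p₁ condβ) (liftPath_zero hπ _ p₁ condα)

theorem deckFun_proj (hπ : IsCoveringMap π) {p₀ p₁ : E} (h : π p₁ = π p₀) (q : E) :
    π (deckFun hπ p₀ p₁ q) = π q := by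
  set β := PathConnectedSpace.somePath p₀ q with hβ
  have condβ : (β.map hπ.continuous).toContinuousMap 0 = π p₁ := by
    show π (β 0) = π p₁; rw [β.source]; exact h.symm
  have h1 := liftPath_lift_apply hπ _ p₁ condβ 1
  show π (liftPath hπ ((β.map hπ.continuous)).toContinuousMap p₁ 1) = π q
  rw [h1]
  show π (β 1) = π q
  rw [β.target]

theorem deckFun_basepoint (hπ : IsCoveringMap π) {p₀ p₁ : E} (h : π p₁ = π p₀) :
    deckFun hπ p₀ p₁ p₀ = p₁ := by
  rw [deckFun_spec hπ h p₀ (Path.refl p₀)]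
  have cond : ((Path.refl p₀).map hπ.continuous).toContinuousMap 0 = π p₁ := by
    show π p₀ = π p₁; exact h.symm
  have huniq : ⇑(ContinuousMap.const I p₁) =
      ⇑(liftPath hπ ((Path.refl p₀).map hπ.continuous).toContinuousMap p₁) := by
    apply liftPath_unique hπ _ p₁ cond
    · funext s; show π p₁ = π p₀; exact h
    · rfl
  rw [← congrFun huniq 1]
  rfl

theorem deckFun_continuous (hπ : IsCoveringMap π) {p₀ p₁ : E} (h : π p₁ = π p₀) :
    Continuous (deckFun hπ p₀ p₁) := by
  rw [continuous_iff_continuousAt]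
  intro q₀
  set T := (hπ (π q₀)).toTrivialization with hT
  have hq₀base : π q₀ ∈ T.baseSet := (hπ (π q₀)).mem_toTrivialization_baseSet
  set W := pathComponentIn (π ⁻¹' T.baseSet) q₀ with hW
  have hWopen : IsOpen W := (T.open_baseSet.preimage hπ.continuous).pathComponentIn q₀
  have hq₀W : q₀ ∈ W := mem_pathComponentIn_self hq₀base
  have hd₀ : π (deckFun hπ p₀ p₁ q₀) = π q₀ := deckFun_proj hπ h q₀
  have hdmem : deckFun hπ p₀ p₁ q₀ ∈ T.source := by
    rw [T.mem_source, hd₀]; exact hq₀base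
  set c₂ := (T (deckFun hπ p₀ p₁ q₀)).2 with hc₂
  have claim : ∀ q ∈ W, deckFun hπ p₀ p₁ q = T.toPartialHomeomorph.symm (π q, c₂) := by
    intro q hq
    obtain ⟨β, hβ⟩ : JoinedIn (π ⁻¹' T.baseSet) q₀ q := hq
    set α₀ := PathConnectedSpace.somePath p₀ q₀ with hα₀
    have hβtarget : ∀ s : I, ((π (β s) : X), c₂) ∈ T.target := fun s => by
      rw [T.target_eq]; exact ⟨hβ s, trivial⟩
    set δfun : I → E := fun s => T.toPartialHomeomorph.symm (π (β s), c₂) with hδf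
    have hδcont : Continuous δfun :=
      T.toPartialHomeomorph.continuousOn_symm.comp_continuous
        ((hπ.continuous.comp β.continuous).prodMk continuous_const) hβtarget
    have hδ0 : δfun 0 = deckFun hπ p₀ p₁ q₀ := by
      have h1 : ((π (β 0) : X), c₂) = T (deckFun hπ p₀ p₁ q₀) := by
        refine Prod.ext ?_ rfl
        rw [T.coe_fst hdmem, hd₀, β.source]
      rw [hδf]
      simp only
      rw [h1, ← T.coe_coe]
      exact T.toPartialHomeomorph.left_inv hdmem
    have hδ1 : δfun 1 = T.toPartialHomeomorph.symm (π q, c₂) := by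
      rw [hδf]; simp only; rw [β.target]
    set δ : Path (deckFun hπ p₀ p₁ q₀) (T.toPartialHomeomorph.symm (π q, c₂)) :=
      ⟨⟨δfun, hδcont⟩, hδ0, hδ1⟩ with hδ
    have cond₀ : (α₀.map hπ.continuous).toContinuousMap 0 = π p₁ := by
      show π (α₀ 0) = π p₁; rw [α₀.source]; exact h.symm
    set Λ₀ := liftPath hπ (α₀.map hπ.continuous).toContinuousMap p₁ with hΛ₀
    have hΛ₀1 : Λ₀ 1 = deckFun hπ p₀ p₁ q₀ := (deckFun_spec hπ h q₀ α₀).symm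
    set Γp : Path p₁ (deckFun hπ p₀ p₁ q₀) :=
      ⟨⟨⇑Λ₀, Λ₀.continuous⟩, liftPath_zero hπ _ p₁ cond₀, hΛ₀1⟩ with hΓp
    have hlift : π ∘ ⇑(Γp.trans δ) = ⇑((α₀.trans β).map hπ.continuous).toContinuousMap := by
      funext s
      show π ((Γp.trans δ) s) = π ((α₀.trans β) s)
      rw [Path.trans_apply, Path.trans_apply]
      split_ifs with hs
      · show π (Λ₀ _) = π (α₀ _)
        exact congrFun (liftPath_lifts hπ _ p₁ cond₀) _
      · show π (δfun _) = π (β _)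
        exact T.proj_symm_apply (hβtarget _)
    have condt : ((α₀.trans β).map hπ.continuous).toContinuousMap 0 = π p₁ := by
      show π ((α₀.trans β) 0) = π p₁
      rw [(α₀.trans β).source]; exact h.symm
    have huniq := liftPath_unique hπ ((α₀.trans β).map hπ.continuous).toContinuousMap p₁
      condt (Γ := (Γp.trans δ).toContinuousMap) hlift (Γp.trans δ).source
    rw [deckFun_spec hπ h q (α₀.trans β), ← congrFun huniq 1]
    exact (Γp.trans δ).target
  have hcontq : ContinuousAt (fun q => T.toPartialHomeomorph.symm (π q, c₂)) q₀ := by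
    have hco : ContinuousOn (fun q => T.toPartialHomeomorph.symm ((π q : X), c₂))
        (π ⁻¹' T.baseSet) := by
      apply T.toPartialHomeomorph.continuousOn_symm.comp
        ((hπ.continuous.prodMk continuous_const).continuousOn)
      intro q hq
      rw [T.target_eq]
      exact ⟨hq, trivial⟩
    exact hco.continuousAt ((T.open_baseSet.preimage hπ.continuous).mem_nhds hq₀base)
  have hev : (fun q => T.toPartialHomeomorph.symm ((π q : X), c₂)) =ᶠ[nhds q₀]
      deckFun hπ p₀ p₁ :=
    Filter.eventuallyEq_of_mem (hWopen.mem_nhds hq₀W) fun q hq => (claim q hq).symm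
  exact hcontq.congr hev

theorem exists_deck (hπ : IsCoveringMap π) {p₀ p₁ : E} (h : π p₁ = π p₀) :
    ∃ φ : E ≃ₜ E, π ∘ ⇑φ = π ∧ φ p₀ = p₁ := by
  have hgf : deckFun hπ p₁ p₀ ∘ deckFun hπ p₀ p₁ = id := by
    apply hπ.eq_of_comp_eq
      ((deckFun_continuous hπ h.symm).comp (deckFun_continuous hπ h))
      continuous_id ?_ p₀ ?_
    · funext q
      show π (deckFun hπ p₁ p₀ (deckFun hπ p₀ p₁ q)) = π q
      rw [deckFun_proj hπ h.symm, deckFun_proj hπ h]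
    · show deckFun hπ p₁ p₀ (deckFun hπ p₀ p₁ p₀) = p₀
      rw [deckFun_basepoint hπ h, deckFun_basepoint hπ h.symm]
  have hfg : deckFun hπ p₀ p₁ ∘ deckFun hπ p₁ p₀ = id := by
    apply hπ.eq_of_comp_eq
      ((deckFun_continuous hπ h).comp (deckFun_continuous hπ h.symm))
      continuous_id ?_ p₁ ?_
    · funext q
      show π (deckFun hπ p₀ p₁ (deckFun hπ p₁ p₀ q)) = π q
      rw [deckFun_proj hπ h, deckFun_proj hπ h.symm]
    · show deckFun hπ p₀ p₁ (deckFun hπ p₁ p₀ p₁) = p₁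
      rw [deckFun_basepoint hπ h.symm, deckFun_basepoint hπ h]
  refine ⟨⟨⟨deckFun hπ p₀ p₁, deckFun hπ p₁ p₀,
    fun q => congrFun hgf q, fun q => congrFun hfg q⟩,
    deckFun_continuous hπ h, deckFun_continuous hπ h.symm⟩,
    funext fun q => deckFun_proj hπ h q, deckFun_basepoint hπ h⟩

end Deck

section Assembly

open CategoryTheory

variable [SimplyConnectedSpace E] [LocallyPathConnectedSpace E]

/-- The homotopy class of loop associated to a deck transformation of a
simply connected covering. -/
def deckHom (hπ : IsCoveringMap π) (p₀ : E) (φ : {ψ : E ≃ₜ E // π ∘ ⇑ψ = π}) :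
    Path.Homotopic.Quotient (π p₀) (π p₀) :=
  ⟦((PathConnectedSpace.somePath p₀ (φ.1 p₀)).map hπ.continuous).cast rfl
    (congrFun φ.2 p₀).symm⟧

theorem deckHom_eq (hπ : IsCoveringMap π) (p₀ : E) (φ : {ψ : E ≃ₜ E // π ∘ ⇑ψ = π})
    (tp : Path (π p₀) (π p₀)) (tp' : Path p₀ (φ.1 p₀)) (htp : ⇑tp = π ∘ ⇑tp') :
    deckHom hπ p₀ φ = (⟦tp⟧ : Path.Homotopic.Quotient (π p₀) (π p₀)) := by
  apply homotopic_of_lifts hπ _ tp (PathConnectedSpace.somePath p₀ (φ.1 p₀)) tp' ?_ htp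
  funext s
  rw [Path.cast_coe]
  rfl

theorem deckHom_inj (hπ : IsCoveringMap π) (p₀ : E) {f g : {ψ : E ≃ₜ E // π ∘ ⇑ψ = π}}
    (h : deckHom hπ p₀ f = deckHom hπ p₀ g) : f = g := by
  set γf := PathConnectedSpace.somePath p₀ (f.1 p₀) with hγf
  set γg := PathConnectedSpace.somePath p₀ (g.1 p₀) with hγg
  have hhom : Path.Homotopic
      ((γf.map hπ.continuous).cast rfl (congrFun f.2 p₀).symm)
      ((γg.map hπ.continuous).cast rfl (congrFun g.2 p₀).symm) := Quotient.exact h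
  have hend' := monodromy hπ hhom p₀ rfl (Γ₀ := γf.toContinuousMap)
    (Γ₁ := γg.toContinuousMap) rfl rfl γf.source γg.source
  have hend : f.1 p₀ = g.1 p₀ := by
    rw [← γf.target, ← γg.target]
    exact hend'
  have hcoe := hπ.eq_of_comp_eq f.1.continuous g.1.continuous (f.2.trans g.2.symm) p₀ hend
  exact Subtype.ext (Homeomorph.ext fun q => congrFun hcoe q)

theorem deckHom_surj (hπ : IsCoveringMap π) (p₀ : E)
    (h : Path.Homotopic.Quotient (π p₀) (π p₀)) :
    ∃ φ : {ψ : E ≃ₜ E // π ∘ ⇑ψ = π}, deckHom hπ p₀ φ = h := by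
  obtain ⟨α, rfl⟩ := Quotient.exists_rep h
  have cond : (α.toContinuousMap) 0 = π p₀ := α.source
  set Γ := liftPath hπ α.toContinuousMap p₀ with hΓ
  have hp₁ : π (Γ 1) = π p₀ := by
    rw [liftPath_lift_apply hπ _ p₀ cond 1]
    exact α.target
  obtain ⟨φh, hφπ, hφp⟩ := exists_deck hπ hp₁
  refine ⟨⟨φh, hφπ⟩, ?_⟩
  exact deckHom_eq hπ p₀ ⟨φh, hφπ⟩ α
    ⟨⟨⇑Γ, Γ.continuous⟩, liftPath_zero hπ _ p₀ cond, hφp.symm⟩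
    (liftPath_lifts hπ _ p₀ cond).symm

theorem deckHom_comp (hπ : IsCoveringMap π) (p₀ : E) (f g : {ψ : E ≃ₜ E // π ∘ ⇑ψ = π})
    (fg : {ψ : E ≃ₜ E // π ∘ ⇑ψ = π}) (hfg : fg.1 = g.1.trans f.1) :
    deckHom hπ p₀ fg = (deckHom hπ p₀ f).trans (deckHom hπ p₀ g) := by
  set γf := PathConnectedSpace.somePath p₀ (f.1 p₀) with hγf
  set γg := PathConnectedSpace.somePath p₀ (g.1 p₀) with hγg
  set cf : Path (π p₀) (π p₀) :=
    (γf.map hπ.continuous).cast rfl (congrFun f.2 p₀).symm with hcf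
  set cg : Path (π p₀) (π p₀) :=
    (γg.map hπ.continuous).cast rfl (congrFun g.2 p₀).symm with hcg
  have hrhs : (deckHom hπ p₀ f).trans (deckHom hπ p₀ g) = ⟦cf.trans cg⟧ :=
    (Path.Homotopic.Quotient.mk_trans cf cg).symm
  rw [hrhs]
  have h1 : fg.1 p₀ = f.1 (g.1 p₀) := by rw [hfg]; rfl
  apply deckHom_eq hπ p₀ fg (cf.trans cg)
    ((γf.trans (γg.map f.1.continuous)).cast rfl h1)
  funext s
  show (cf.trans cg) s = π (((γf.trans (γg.map f.1.continuous)).cast rfl h1) s)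
  have hc : (((γf.trans (γg.map f.1.continuous)).cast rfl h1) s)
      = (γf.trans (γg.map f.1.continuous)) s :=
    congrFun (Path.cast_coe (γf.trans (γg.map f.1.continuous)) rfl h1) s
  rw [hc, Path.trans_apply, Path.trans_apply]
  split_ifs with hs
  · rw [hcf]
    simp only [Path.cast_coe, Path.map_coe]
    rfl
  · rw [hcg]
    simp only [Path.cast_coe, Path.map_coe]
    show π (γg _) = π (f.1 (γg _))
    exact (congrFun f.2 _).symm

end Assembly

end DeckAux

variable {E X : Type*} [TopologicalSpace E] [TopologicalSpace X]

/-- The group of deck transformations of a map `π : E → X`: homeomorphisms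
`φ : E ≃ₜ E` satisfying `π ∘ φ = π`, under composition. -/
def DeckGroup (π : E → X) : Type _ := {φ : E ≃ₜ E // π ∘ ⇑φ = π}

instance (π : E → X) : Group (DeckGroup π) where
  mul f g := ⟨g.1.trans f.1, by
    funext x
    have hf := congrFun f.2 (g.1 x)
    have hg := congrFun g.2 x
    simpa using hf.trans hg⟩
  one := ⟨Homeomorph.refl E, rfl⟩
  inv f := ⟨f.1.symm, by
    funext x
    have := congrFun f.2 (f.1.symm x)
    simpa using this.symm⟩
  mul_assoc f g h := Subtype.ext (Homeomorph.ext fun x => rfl)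
  one_mul f := Subtype.ext (Homeomorph.ext fun x => rfl)
  mul_one f := Subtype.ext (Homeomorph.ext fun x => rfl)
  inv_mul_cancel f := Subtype.ext (Homeomorph.ext fun x => f.1.symm_apply_apply x)

noncomputable section MainProof

open CategoryTheory

attribute [local instance] Path.Homotopic.setoid

/-- For a surjective covering map `π : E → X` with `E` simply connected and
locally path-connected and `X` locally path-connected, the group of deck
transformations of `π` is isomorphic to the fundamental group of `X` based at
`π p₀`. -/
theorem deckGroup_mulEquiv_fundamentalGroup
    [SimplyConnectedSpace E] [LocallyPathConnectedSpace E] [LocallyPathConnectedSpace X]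
    (π : E → X) (hπ : IsCoveringMap π) (hsurj : Function.Surjective π) (p₀ : E) :
    Nonempty (DeckGroup π ≃* FundamentalGroup X (π p₀)) := by
  haveI : ∀ x : X, Nonempty (π ⁻¹' {x}) := fun x => ⟨⟨(hsurj x).choose, (hsurj x).choose_spec⟩⟩
  constructor
  let F : DeckGroup π → FundamentalGroup X (π p₀) := fun φ =>
    DeckAux.deckHom hπ p₀ (φ⁻¹ : DeckGroup π)
  have hFhom : ∀ φ : DeckGroup π, F φ = DeckAux.deckHom hπ p₀ (φ⁻¹ : DeckGroup π) :=
    fun φ => rfl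
  have hmul : ∀ f g : DeckGroup π, F (f * g) = F f * F g := by
    intro f g
    calc F (f * g)
        = DeckAux.deckHom hπ p₀ ((f * g)⁻¹ : DeckGroup π) := hFhom _
      _ = (DeckAux.deckHom hπ p₀ (g⁻¹ : DeckGroup π)).trans (DeckAux.deckHom hπ p₀ (f⁻¹ : DeckGroup π)) :=
          DeckAux.deckHom_comp hπ p₀ (g⁻¹ : DeckGroup π) (f⁻¹ : DeckGroup π) ((f * g)⁻¹ : DeckGroup π) (by rw [mul_inv_rev]; rfl)
      _ = F f * F g := rfl
  have hinj : Function.Injective F := by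
    intro f g h
    have h1 : DeckAux.deckHom hπ p₀ (f⁻¹ : DeckGroup π) = DeckAux.deckHom hπ p₀ (g⁻¹ : DeckGroup π) := by
      rw [← hFhom, ← hFhom, h]
    exact inv_injective (DeckAux.deckHom_inj hπ p₀ h1)
  have hsurjF : Function.Surjective F := by
    intro a
    obtain ⟨ψ, hψ⟩ := DeckAux.deckHom_surj hπ p₀ a
    refine ⟨(ψ : DeckGroup π)⁻¹, ?_⟩
    rw [hFhom]
    exact (congrArg (fun φ : DeckGroup π => DeckAux.deckHom hπ p₀ φ) (@inv_inv (DeckGroup π) _ ψ)).trans hψ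
  exact MulEquiv.mk' (Equiv.ofBijective F ⟨hinj, hsurjF⟩) hmul

end MainProof
end
end

section
/- Let R > 0, let c ∈ ℂ with c ≠ 0, and let f : ℂ → ℂ be complex-differentiable at every point of A_R = {z ∈ ℂ : |z| > R}, with deriv f z → c as z → ∞. Then there exists R' ≥ R such that f is injective on {z ∈ ℂ : |z| > R'}. (A holomorphic function on a neighborhood of infinity whose derivative has a nonzero limit at infinity is one-to-one in a neighborhood of infinity.) -/
open Filter

private lemma segOut {a w : ℂ} {m : ℝ} (hm : 0 ≤ m) (ha : 2 * m < ‖a‖) (hw : ‖a‖ ≤ ‖w‖)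
    (hre : 0 ≤ (a * (starRingEnd ℂ) w).re) : ∀ z ∈ segment ℝ a w, m < ‖z‖ := by
  intro z hz
  rw [segment_eq_image] at hz
  obtain ⟨t, ⟨ht0, ht1⟩, rfl⟩ := hz
  set z := (1 - t) • a + t • w with hzdef
  have hz2 : ‖z‖ ^ 2 = (1 - t) ^ 2 * ‖a‖ ^ 2 + t ^ 2 * ‖w‖ ^ 2
      + 2 * (t * (1 - t)) * (a * (starRingEnd ℂ) w).re := by
    have h1 : ∀ x : ℂ, ‖x‖ ^ 2 = Complex.normSq x := fun x => by
      exact (Complex.normSq_eq_norm_sq x).symm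
    rw [h1, h1, h1, hzdef]
    simp [Complex.normSq_add, Complex.real_smul, Complex.normSq_mul, Complex.normSq_ofReal,
      map_mul, Complex.conj_ofReal]
    simp [Complex.normSq_apply]
    ring
  have hmlt : m ^ 2 < ‖z‖ ^ 2 := by
    rw [hz2]
    have hW2 : ‖a‖ ^ 2 ≤ ‖w‖ ^ 2 := by nlinarith [norm_nonneg a]
    have hA2 : 4 * m ^ 2 < ‖a‖ ^ 2 := by nlinarith
    nlinarith [sq_nonneg (1 - 2 * t), mul_le_mul_of_nonneg_left hW2 (sq_nonneg t),
      mul_nonneg (mul_nonneg ht0 (by linarith : (0:ℝ) ≤ 1 - t)) hre]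
  exact lt_of_pow_lt_pow_left₀ 2 (norm_nonneg z) hmlt

private lemma segEst {f : ℂ → ℂ} {c : ℂ} {ε : ℝ} {s : Set ℂ} (hs : Convex ℝ s)
    (hdf : ∀ z ∈ s, DifferentiableAt ℂ f z) (hbd : ∀ z ∈ s, ‖deriv f z - c‖ ≤ ε)
    {a b : ℂ} (ha : a ∈ s) (hb : b ∈ s) :
    ‖f b - f a - c * (b - a)‖ ≤ ε * ‖b - a‖ := by
  set g := fun z : ℂ => f z - c * z with hgdef
  have key : ‖g b - g a‖ ≤ ε * ‖b - a‖ := by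
    apply hs.norm_image_sub_le_of_norm_hasFDerivWithin_le
      (f' := fun z => (1 : ℂ →L[ℂ] ℂ).smulRight (deriv f z - c)) ?_ ?_ ha hb
    · intro z hz
      have h1 : HasDerivAt g (deriv f z - c) z := by
        have := ((hdf z hz).hasDerivAt).sub ((hasDerivAt_id z).const_mul c)
        simp only [id_eq, mul_one] at this; exact this
      exact h1.hasFDerivAt.hasFDerivWithinAt
    · intro z hz
      calc ‖(1 : ℂ →L[ℂ] ℂ).smulRight (deriv f z - c)‖
          = ‖(1 : ℂ →L[ℂ] ℂ)‖ * ‖deriv f z - c‖ :=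
            ContinuousLinearMap.norm_smulRight_apply _ _
        _ ≤ ε := by rw [norm_one, one_mul]; exact hbd z hz
  have : g b - g a = f b - f a - c * (b - a) := by simp [hgdef]; ring
  rwa [this] at key

set_option maxHeartbeats 1000000 in
/-- A function holomorphic on a neighborhood of infinity whose derivative tends to a
nonzero limit at infinity is injective in a neighborhood of infinity. -/
theorem injOn_nhds_infty_of_deriv_tendsto (R : ℝ) (hR : 0 < R) (c : ℂ) (hc : c ≠ 0)
    (f : ℂ → ℂ) (hf : ∀ z : ℂ, R < ‖z‖ → DifferentiableAt ℂ f z)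
    (hderiv : Tendsto (deriv f) (Bornology.cobounded ℂ) (nhds c)) :
    ∃ R' : ℝ, R ≤ R' ∧ Set.InjOn f {z : ℂ | R' < ‖z‖} := by
  set ε := ‖c‖ / 20 with hεdef
  have hε : 0 < ε := by have := norm_pos_iff.2 hc; rw [hεdef]; linarith
  obtain ⟨R₀, hR₀⟩ : ∃ r : ℝ, ∀ z : ℂ, r ≤ ‖z‖ → ‖deriv f z - c‖ ≤ ε := by
    have hev : ∀ᶠ z in Bornology.cobounded ℂ, ‖deriv f z - c‖ ≤ ε := by
      have := hderiv (Metric.closedBall_mem_nhds c hε)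
      filter_upwards [this] with z hz
      simpa [dist_eq_norm] using hz
    obtain ⟨r, -, hr⟩ := (Filter.hasBasis_cobounded_norm (E := ℂ)).eventually_iff.1 hev
    exact ⟨r, fun z hz => hr hz⟩
  set m := max R (max R₀ 1) with hmdef
  have hm1 : 1 ≤ m := le_trans (le_max_right R₀ 1) (le_max_right _ _)
  have hmR : R ≤ m := le_max_left _ _
  have hmR₀ : R₀ ≤ m := le_trans (le_max_left R₀ 1) (le_max_right _ _)
  have hm0 : 0 < m := lt_of_lt_of_le one_pos hm1
  refine ⟨2 * m, by linarith, ?_⟩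
  have good : ∀ z : ℂ, m < ‖z‖ → DifferentiableAt ℂ f z ∧ ‖deriv f z - c‖ ≤ ε := by
    intro z hz
    exact ⟨hf z (lt_of_le_of_lt hmR hz), hR₀ z (le_of_lt (lt_of_le_of_lt hmR₀ hz))⟩
  intro a ha b hb hab
  by_contra hne
  simp only [Set.mem_setOf_eq] at ha hb
  rw [show (‖a‖ : ℝ) = ‖a‖ from rfl] at ha
  rw [show (‖b‖ : ℝ) = ‖b‖ from rfl] at hb
  have hba : b - a ≠ 0 := sub_ne_zero.2 (Ne.symm hne)
  have hba' : (0:ℝ) < ‖b - a‖ := norm_pos_iff.2 hba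
  have main : ‖c * (b - a)‖ ≤ 16 * ε * ‖b - a‖ := by
    by_cases hseg : ∀ z ∈ segment ℝ a b, 2 * m ^ 2 < ‖z‖ ^ 2
    · -- straight segment works
      have hsub : ∀ z ∈ segment ℝ a b, m < ‖z‖ := by
        intro z hz
        have h2 := hseg z hz
        have h3 : m ^ 2 < ‖z‖ ^ 2 := by nlinarith
        exact lt_of_pow_lt_pow_left₀ 2 (norm_nonneg z) h3
      have h := segEst (convex_segment a b) (fun z hz => (good z (hsub z hz)).1)
        (fun z hz => (good z (hsub z hz)).2) (left_mem_segment ℝ a b) (right_mem_segment ℝ a b)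
      rw [hab] at h
      simp only [sub_self, zero_sub, norm_neg] at h
      nlinarith [norm_nonneg (c * (b - a))]
    · -- detour through a perpendicular point w
      push_neg at hseg
      obtain ⟨z₀, hz₀s, hz₀⟩ := hseg
      have hz₀n : ‖z₀‖ ≤ 3 / 2 * m := by nlinarith [norm_nonneg z₀]
      -- distance bounds from segment membership
      obtain ⟨t, ⟨ht0, ht1⟩, hz₀eq⟩ := segment_eq_image ℝ a b ▸ hz₀s
      have haz : ‖a - z₀‖ ≤ ‖b - a‖ := by
        have h1 : a - z₀ = t • (a - b) := by rw [← hz₀eq]; module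
        rw [h1, norm_smul, Real.norm_eq_abs, abs_of_nonneg ht0, norm_sub_rev a b]
        nlinarith
      have hbz : ‖b - z₀‖ ≤ ‖b - a‖ := by
        have h1 : b - z₀ = (1 - t) • (b - a) := by rw [← hz₀eq]; module
        rw [h1, norm_smul, Real.norm_eq_abs, abs_of_nonneg (by linarith : (0:ℝ) ≤ 1 - t)]
        nlinarith
      set S := max ‖a‖ ‖b‖ with hSdef
      have hSa : ‖a‖ ≤ S := le_max_left _ _
      have hSb : ‖b‖ ≤ S := le_max_right _ _
      have hS : 2 * m < S := lt_of_lt_of_le ha hSa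
      have hSba : S ≤ ‖b - a‖ + 3 / 2 * m := by
        rcases max_cases ‖a‖ ‖b‖ with ⟨hcase, -⟩ | ⟨hcase, -⟩ <;> rw [hSdef, hcase]
        · calc ‖a‖ ≤ ‖a - z₀‖ + ‖z₀‖ := by
                have := norm_add_le (a - z₀) z₀; simpa using this
            _ ≤ ‖b - a‖ + 3 / 2 * m := add_le_add haz hz₀n
        · calc ‖b‖ ≤ ‖b - z₀‖ + ‖z₀‖ := by
                have := norm_add_le (b - z₀) z₀; simpa using this
            _ ≤ ‖b - a‖ + 3 / 2 * m := add_le_add hbz hz₀n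
      have hS4 : S ≤ 4 * ‖b - a‖ := by nlinarith
      -- the detour point
      set d := Complex.I * (a - b) with hddef
      have hdnorm : ‖d‖ = ‖b - a‖ := by
        rw [hddef, norm_mul, Complex.norm_I, one_mul, norm_sub_rev]
      set σ : ℝ := if 0 ≤ (a * (starRingEnd ℂ) d).re then 1 else -1 with hσdef
      set w : ℂ := ((σ * S / ‖b - a‖ : ℝ) : ℂ) * d with hwdef
      have hwnorm : ‖w‖ = S := by
        rw [hwdef, norm_mul, show ‖((σ * S / ‖b - a‖ : ℝ) : ℂ)‖ = |σ * S / ‖b - a‖| from Complex.norm_real _, hdnorm, abs_div, abs_mul]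
        rw [abs_of_nonneg (by positivity : (0:ℝ) ≤ S), abs_of_pos hba']
        have hσabs : |σ| = 1 := by rw [hσdef]; split <;> norm_num
        field_simp [hσabs]
        rw [hσabs, one_mul]
      have hconjw : (starRingEnd ℂ) w = ((σ * S / ‖b - a‖ : ℝ) : ℂ) * (starRingEnd ℂ) d := by
        rw [hwdef, map_mul, Complex.conj_ofReal]
      have hre_mul : ∀ x : ℂ, (x * (starRingEnd ℂ) w).re
          = (σ * S / ‖b - a‖) * (x * (starRingEnd ℂ) d).re := by
        intro x
        rw [hconjw, show x * (((σ * S / ‖b - a‖ : ℝ) : ℂ) * (starRingEnd ℂ) d)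
          = ((σ * S / ‖b - a‖ : ℝ) : ℂ) * (x * (starRingEnd ℂ) d) by ring]
        simp [Complex.re_ofReal_mul]
      have hre_a : 0 ≤ (a * (starRingEnd ℂ) w).re := by
        rw [hre_mul a, hσdef]
        split <;> rename_i hcond
        · have : (0:ℝ) ≤ 1 * S / ‖b - a‖ := by positivity
          exact mul_nonneg this hcond
        · push_neg at hcond
          have h1 : (-1) * S / ‖b - a‖ ≤ 0 := by
            apply div_nonpos_of_nonpos_of_nonneg <;> nlinarith
          nlinarith
      have hre_diff : ((a - b) * (starRingEnd ℂ) d).re = 0 := by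
        rw [hddef]
        simp only [map_mul, Complex.conj_I, Complex.mul_re, Complex.mul_im,
          Complex.conj_re, Complex.conj_im, Complex.neg_re, Complex.neg_im,
          Complex.I_re, Complex.I_im, Complex.sub_re, Complex.sub_im]
        ring
      have hre_b : 0 ≤ (b * (starRingEnd ℂ) w).re := by
        have : (b * (starRingEnd ℂ) w).re = (a * (starRingEnd ℂ) w).re := by
          rw [hre_mul b, hre_mul a]
          have : (b * (starRingEnd ℂ) d).re = (a * (starRingEnd ℂ) d).re := by
            have h2 : a * (starRingEnd ℂ) d - b * (starRingEnd ℂ) d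
                = (a - b) * (starRingEnd ℂ) d := by ring
            have h3 := congrArg Complex.re h2
            simp only [Complex.sub_re] at h3
            rw [hre_diff] at h3
            linarith
          rw [this]
        rw [this]; exact hre_a
      -- segments [a,w] and [b,w] stay in the good region
      have outA : ∀ z ∈ segment ℝ a w, m < ‖z‖ :=
        segOut hm0.le ha (hwnorm ▸ hSa) hre_a
      have outB : ∀ z ∈ segment ℝ b w, m < ‖z‖ :=
        segOut hm0.le hb (hwnorm ▸ hSb) hre_b
      have E1 := segEst (convex_segment a w) (fun z hz => (good z (outA z hz)).1)
        (fun z hz => (good z (outA z hz)).2) (left_mem_segment ℝ a w) (right_mem_segment ℝ a w)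
      have E2 := segEst (convex_segment b w) (fun z hz => (good z (outB z hz)).1)
        (fun z hz => (good z (outB z hz)).2) (right_mem_segment ℝ b w) (left_mem_segment ℝ b w)
      -- E1 : ‖f w - f a - c*(w-a)‖ ≤ ε‖w-a‖ ; E2 : ‖f b - f w - c*(b-w)‖ ≤ ε‖b-w‖
      have hwa : ‖w - a‖ ≤ 2 * S := by
        calc ‖w - a‖ ≤ ‖w‖ + ‖a‖ := norm_sub_le _ _
          _ ≤ 2 * S := by rw [hwnorm]; linarith
      have hbw : ‖b - w‖ ≤ 2 * S := by
        calc ‖b - w‖ ≤ ‖b‖ + ‖w‖ := norm_sub_le _ _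
          _ ≤ 2 * S := by rw [hwnorm]; linarith
      have hsum : f b - f w - c * (b - w) + (f w - f a - c * (w - a)) = -(c * (b - a)) := by
        rw [hab]; ring
      calc ‖c * (b - a)‖ = ‖f b - f w - c * (b - w) + (f w - f a - c * (w - a))‖ := by
            rw [hsum, norm_neg]
        _ ≤ ‖f b - f w - c * (b - w)‖ + ‖f w - f a - c * (w - a)‖ := norm_add_le _ _
        _ ≤ ε * ‖b - w‖ + ε * ‖w - a‖ := add_le_add E2 E1
        _ ≤ ε * (2 * S) + ε * (2 * S) := by
            exact add_le_add (mul_le_mul_of_nonneg_left hbw hε.le)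
              (mul_le_mul_of_nonneg_left hwa hε.le)
        _ ≤ 16 * ε * ‖b - a‖ := by nlinarith
  have hnorm : ‖c * (b - a)‖ = ‖c‖ * ‖b - a‖ := by simp
  rw [hnorm, hεdef] at main
  nlinarith [norm_pos_iff.2 hc, hba']
end

section
/- Let R > 0, let c ∈ ℂ with c ≠ 0, and let f : ℂ → ℂ be complex-differentiable at every point of A_R = {z ∈ ℂ : |z| > R}, with deriv f z → c as z → ∞. Then there exists a₀ ∈ ℂ such that f(z) − c·z → a₀ as z → ∞. (Such an f has an expansion f(z) = c·z + a₀ + Σ_{n≥1} αₙ z^{−n} in a neighborhood of infinity; in particular f(z) − c·z converges at infinity.) -/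
open Filter

section Aux

open Metric Set Complex

lemma decay_sq (R : ℝ) (hR : 0 < R) (g : ℂ → ℂ)
    (hgd : ∀ z : ℂ, R < ‖z‖ → DifferentiableAt ℂ g z)
    (hg0 : Tendsto g (Bornology.cobounded ℂ) (nhds 0))
    (hint : ∀ r : ℝ, R < r → (∮ z in C(0, r), g z) = 0) :
    ∃ M r₁ : ℝ, 0 < M ∧ R < r₁ ∧ ∀ z : ℂ, r₁ ≤ ‖z‖ →
      ‖g z‖ ≤ M / (‖z‖) ^ 2 := by
  have hRinv : (0:ℝ) < R⁻¹ := inv_pos.2 hR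
  set s : Set ℂ := ball (0:ℂ) R⁻¹ with hs
  have hsmem : s ∈ nhds (0:ℂ) := ball_mem_nhds _ hRinv
  set F : ℂ → ℂ := fun w => g w⁻¹ with hF
  -- membership translation
  have hmem : ∀ w : ℂ, w ∈ s \ {0} → R < ‖w⁻¹‖ := by
    intro w hw
    rcases hw with ⟨hw1, hw2⟩
    have hwne : w ≠ 0 := hw2
    have h1 : ‖w‖ < R⁻¹ := by
      have := hw1; rw [hs, mem_ball_zero_iff] at this; simpa using this
    have h2 : 0 < ‖w‖ := by simpa using hwne
    rw [norm_inv]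
    calc R = (R⁻¹)⁻¹ := by rw [inv_inv]
    _ < (‖w‖)⁻¹ := by exact inv_strictAnti₀ h2 h1
  have hFd : DifferentiableOn ℂ F (s \ {0}) := by
    intro w hw
    have hwne : w ≠ 0 := hw.2
    exact ((hgd _ (hmem w hw)).comp w (differentiableAt_id.inv hwne)).differentiableWithinAt
  have hinv : Tendsto (fun w : ℂ => w⁻¹) (nhdsWithin (0:ℂ) {0}ᶜ) (Bornology.cobounded ℂ) := by
    exact tendsto_inv₀_nhdsNE_zero
  have hFtend : Tendsto F (nhdsWithin (0:ℂ) {0}ᶜ) (nhds 0) := hg0.comp hinv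
  have hbdd : IsBoundedUnder (· ≤ ·) (nhdsWithin (0:ℂ) {0}ᶜ)
      (norm ∘ fun z => F z - F 0) :=
    (hFtend.sub_const (F 0)).norm.isBoundedUnder_le
  have ho : (fun z => F z - F 0) =o[nhdsWithin (0:ℂ) {0}ᶜ] fun z => (z - 0)⁻¹ :=
    hbdd.isLittleO_sub_self_inv
  have hlim : limUnder (nhdsWithin (0:ℂ) {0}ᶜ) F = 0 := hFtend.limUnder_eq
  have hGd : DifferentiableOn ℂ (Function.update F 0 0) s := by
    have := Complex.differentiableOn_update_limUnder_of_isLittleO hsmem hFd ho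
    rwa [hlim] at this
  set G : ℂ → ℂ := Function.update F 0 0 with hGdef
  have hG0 : G 0 = 0 := Function.update_self _ _ _
  have hGne : ∀ w : ℂ, w ≠ 0 → G w = g w⁻¹ := fun w hw => Function.update_of_ne hw _ _
  set G₁ : ℂ → ℂ := dslope G 0 with hG₁def
  have hG₁d : DifferentiableOn ℂ G₁ s := (Complex.differentiableOn_dslope hsmem).2 hGd
  have hG₁ne : ∀ w : ℂ, w ≠ 0 → G₁ w = w⁻¹ * g w⁻¹ := by
    intro w hw
    rw [hG₁def, dslope_of_ne _ hw, slope_def_field, hG0, hGne w hw, sub_zero, sub_zero,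
      div_eq_inv_mul]
  -- G₁ is continuous at 0
  have hG₁c : ContinuousAt G₁ 0 := (hG₁d.differentiableAt hsmem).continuousAt
  set b : ℂ := G₁ 0 with hb
  -- z * g z = G₁ z⁻¹ for |z| > R
  have hzg : ∀ z : ℂ, R < ‖z‖ → z * g z = G₁ z⁻¹ := by
    intro z hz
    have hzne : z ≠ 0 := by
      intro h; rw [h] at hz; simp at hz; linarith
    have : G₁ z⁻¹ = (z⁻¹)⁻¹ * g (z⁻¹)⁻¹ := hG₁ne _ (inv_ne_zero hzne)
    rw [this, inv_inv]
  -- b = 0 via the circle integrals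
  have htend2 : Tendsto (fun z : ℂ => b - G₁ z⁻¹) (Bornology.cobounded ℂ) (nhds 0) := by
    have h1 : Tendsto (fun z : ℂ => G₁ z⁻¹) (Bornology.cobounded ℂ) (nhds b) :=
      hG₁c.tendsto.comp tendsto_inv₀_cobounded
    have := Filter.Tendsto.sub
      (tendsto_const_nhds : Tendsto (fun _ : ℂ => b) (Bornology.cobounded ℂ) (nhds b)) h1
    simpa using this
  have key : ∀ ε : ℝ, 0 < ε → ‖b‖ ≤ ε := by
    intro ε hε
    have hev : ∀ᶠ z : ℂ in Bornology.cobounded ℂ, ‖b - G₁ z⁻¹‖ < ε := by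
      have := htend2.norm
      rw [norm_zero] at this
      exact this.eventually_lt_const hε
    rw [← comap_norm_atTop] at hev
    obtain ⟨t, ht, hsub⟩ := Filter.mem_comap.1 hev
    obtain ⟨r₀, hr₀⟩ := Filter.mem_atTop_sets.1 ht
    set r : ℝ := max r₀ (R + 1) with hr
    have hrR : R < r := lt_of_lt_of_le (by linarith) (le_max_right _ _)
    have hrpos : 0 < r := lt_trans hR hrR
    have habs : ∀ z : ℂ, z ∈ sphere (0:ℂ) r → ‖z‖ = r := by
      intro z hz
      rw [mem_sphere_zero_iff_norm] at hz
      simpa using hz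
    have hgcont : ContinuousOn g (sphere (0:ℂ) r) := by
      intro z hz
      exact ((hgd z (by rw [habs z hz]; exact hrR)).continuousAt).continuousWithinAt
    have hci1 : CircleIntegrable g 0 r := hgcont.circleIntegrable hrpos.le
    have hci2 : CircleIntegrable (fun z => b * (z - 0)⁻¹) 0 r := by
      apply ContinuousOn.circleIntegrable hrpos.le
      intro z hz
      have hzne : z ≠ 0 := by
        intro h
        have := habs z hz; rw [h] at this; simp at this; linarith
      exact (continuousAt_const.mul ((continuousAt_id.sub continuousAt_const).inv₀
        (by simpa using hzne))).continuousWithinAt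
    have heq : (∮ z in C(0, r), (b * (z - 0)⁻¹ - g z)) = 2 * (Real.pi : ℂ) * I * b := by
      rw [circleIntegral.integral_sub hci2 hci1, hint r hrR, sub_zero,
        circleIntegral.integral_const_mul,
        circleIntegral.integral_sub_inv_of_mem_ball (mem_ball_self hrpos)]
      ring
    have hbound : ∀ z ∈ sphere (0:ℂ) r, ‖b * (z - 0)⁻¹ - g z‖ ≤ ε / r := by
      intro z hz
      have habz : ‖z‖ = r := habs z hz
      have hzR : R < ‖z‖ := by rw [habz]; exact hrR
      have hzne : z ≠ 0 := by
        intro h; rw [h] at habz; simp at habz; linarith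
      have hrw : b * (z - 0)⁻¹ - g z = z⁻¹ * (b - G₁ z⁻¹) := by
        rw [← hzg z hzR, sub_zero, mul_sub, ← mul_assoc, inv_mul_cancel₀ hzne, one_mul]
        ring
      rw [hrw, norm_mul, norm_inv]
      have hnz : ‖z‖ = r := by simpa using habz
      have hlt : ‖b - G₁ z⁻¹‖ < ε := by
        apply hsub
        apply hr₀
        rw [hnz]
        exact le_max_left _ _
      rw [hnz, div_eq_inv_mul]
      exact mul_le_mul_of_nonneg_left hlt.le (by positivity)
    have hle := circleIntegral.norm_integral_le_of_norm_le_const hrpos.le hbound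
    rw [heq] at hle
    have hn : ‖2 * (Real.pi:ℂ) * I * b‖ = 2 * Real.pi * ‖b‖ := by
      simp [norm_mul, Complex.norm_I, Complex.norm_ofNat, Complex.norm_real,
        _root_.abs_of_nonneg Real.pi_pos.le]
    rw [hn] at hle
    have h2 : 2 * Real.pi * r * (ε / r) = 2 * Real.pi * ε := by field_simp
    rw [h2] at hle
    have hπ := Real.pi_pos
    nlinarith
  have hbz : b = 0 := by
    by_contra hbne
    have hpos : 0 < ‖b‖ := norm_pos_iff.2 hbne
    have := key (‖b‖ / 2) (by linarith)
    linarith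
  -- second dslope
  set G₂ : ℂ → ℂ := dslope G₁ 0 with hG₂def
  have hG₂d : DifferentiableOn ℂ G₂ s := (Complex.differentiableOn_dslope hsmem).2 hG₁d
  have hG₂c : ContinuousAt G₂ 0 := (hG₂d.differentiableAt hsmem).continuousAt
  obtain ⟨δ, hδpos, hδ⟩ := Metric.continuousAt_iff.1 hG₂c 1 one_pos
  set M : ℝ := ‖G₂ 0‖ + 1 with hM
  have hMpos : 0 < M := by positivity
  refine ⟨M, max (δ⁻¹ + 1) (R + 1), hMpos, lt_of_lt_of_le (by linarith) (le_max_right _ _), ?_⟩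
  intro z hz
  have hzR : R < ‖z‖ :=
    lt_of_lt_of_le (by linarith) (le_trans (le_max_right _ _) hz)
  have hzinvδ : ‖z⁻¹‖ < δ := by
    have h1 : δ⁻¹ < ‖z‖ :=
      lt_of_lt_of_le (by linarith [le_max_left (δ⁻¹ + 1) (R + 1)])
        (le_trans (le_max_left _ _) hz)
    rw [norm_inv]
    calc (‖z‖)⁻¹ < (δ⁻¹)⁻¹ := inv_strictAnti₀ (inv_pos.2 hδpos) h1
    _ = δ := inv_inv δ
  have hzne : z ≠ 0 := by
    intro h; rw [h] at hzR; simp at hzR; linarith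
  have hG₂bound : ‖G₂ z⁻¹‖ ≤ M := by
    have := hδ (show dist z⁻¹ 0 < δ by simpa [Complex.dist_eq] using hzinvδ)
    rw [dist_eq_norm] at this
    calc ‖G₂ z⁻¹‖ = ‖(G₂ z⁻¹ - G₂ 0) + G₂ 0‖ := by ring_nf
    _ ≤ ‖G₂ z⁻¹ - G₂ 0‖ + ‖G₂ 0‖ := norm_add_le _ _
    _ ≤ M := by rw [hM]; linarith
  have hG₂ne : G₁ z⁻¹ = z⁻¹ * G₂ z⁻¹ := by
    have h1 : G₂ z⁻¹ = (z⁻¹)⁻¹ * G₁ z⁻¹ := by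
      rw [hG₂def, dslope_of_ne _ (inv_ne_zero hzne), slope_def_field, ← hb, hbz, sub_zero,
        sub_zero, div_eq_inv_mul]
    rw [h1, inv_inv, ← mul_assoc, inv_mul_cancel₀ hzne, one_mul]
  have hgz : g z = z⁻¹ * (z⁻¹ * G₂ z⁻¹) := by
    have := hzg z hzR
    rw [hG₂ne] at this
    field_simp at this ⊢
    linear_combination this
  rw [hgz, norm_mul, norm_mul, norm_inv]
  have habspos : 0 < ‖z‖ := by
    have : (0:ℝ) < R := hR
    linarith
  have h2 : (‖z‖)⁻¹ * ((‖z‖)⁻¹ * M) = M / ‖z‖ ^ 2 := by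
    rw [sq]; field_simp
  calc (‖z‖)⁻¹ * ((‖z‖)⁻¹ * ‖G₂ z⁻¹‖)
      ≤ (‖z‖)⁻¹ * ((‖z‖)⁻¹ * M) := by
        apply mul_le_mul_of_nonneg_left _ (by positivity)
        exact mul_le_mul_of_nonneg_left hG₂bound (by positivity)
    _ = M / ‖z‖ ^ 2 := h2

/-- A function holomorphic on a neighborhood of infinity whose derivative tends to a
nonzero limit `c` at infinity has an expansion `f z = c * z + a₀ + O(1/z)` near
infinity; in particular `f z - c * z` converges at infinity. -/
theorem sub_linear_tendsto_of_deriv_tendsto (R : ℝ) (hR : 0 < R) (c : ℂ) (hc : c ≠ 0)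
    (f : ℂ → ℂ) (hf : ∀ z : ℂ, R < ‖z‖ → DifferentiableAt ℂ f z)
    (hderiv : Tendsto (deriv f) (Bornology.cobounded ℂ) (nhds c)) :
    ∃ a₀ : ℂ, Tendsto (fun z => f z - c * z) (Bornology.cobounded ℂ) (nhds a₀) := by
  set A : Set ℂ := {z : ℂ | R < ‖z‖} with hA
  have hAopen : IsOpen A := isOpen_lt continuous_const continuous_norm
  have hfd : DifferentiableOn ℂ f A := fun z hz => (hf z hz).differentiableWithinAt
  have han : AnalyticOnNhd ℂ f A := hfd.analyticOnNhd hAopen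
  set g : ℂ → ℂ := fun z => deriv f z - c with hgdef
  have hgd : ∀ z : ℂ, R < ‖z‖ → DifferentiableAt ℂ g z := by
    intro z hz
    exact ((han.deriv z hz).differentiableAt).sub_const c
  have hg0 : Tendsto g (Bornology.cobounded ℂ) (nhds 0) := by
    have := hderiv.sub_const c
    simpa using this
  -- the primitive
  have hh : ∀ z : ℂ, R < ‖z‖ → HasDerivAt (fun w => f w - c * w) (g z) z := by
    intro z hz
    have hcz : HasDerivAt (fun w : ℂ => c * w) c z := by
      simpa using (hasDerivAt_id z).const_mul c
    exact ((hf z hz).hasDerivAt).sub hcz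
  have hint : ∀ r : ℝ, R < r → (∮ z in C(0, r), g z) = 0 := by
    intro r hr
    have hrpos : (0:ℝ) < r := lt_trans hR hr
    apply circleIntegral.integral_eq_zero_of_hasDerivWithinAt hrpos.le
      (f := fun w => f w - c * w)
    intro z hz
    have habz : ‖z‖ = r := by
      rw [mem_sphere_zero_iff_norm] at hz
      simpa using hz
    exact (hh z (by rw [habz]; exact hr)).hasDerivWithinAt
  obtain ⟨M, r₁, hMpos, hr₁R, hdecay⟩ := decay_sq R hR g hgd hg0 hint
  have ht₀pos : (0:ℝ) < r₁ := lt_trans hR hr₁R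
  -- continuity of g ∘ ofReal on [r₁, ∞)
  have hgcont : ContinuousOn (fun t : ℝ => g ↑t) (Ici r₁) := by
    intro t ht
    have htR : R < ‖(t:ℂ)‖ := by
      rw [Complex.norm_real, Real.norm_eq_abs, abs_of_pos (lt_of_lt_of_le ht₀pos ht)]
      exact lt_of_lt_of_le hr₁R ht
    exact ((hgd _ htR).continuousAt.comp Complex.continuous_ofReal.continuousAt
      ).continuousWithinAt
  -- integrability of g on (r₁, ∞)
  have hInt : MeasureTheory.IntegrableOn (fun t : ℝ => g ↑t) (Ioi r₁) := by
    have hmaj : MeasureTheory.IntegrableOn (fun t : ℝ => M * t ^ (-2:ℝ)) (Ioi r₁) :=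
      (integrableOn_Ioi_rpow_of_lt (by norm_num) ht₀pos).const_mul M
    apply MeasureTheory.Integrable.mono' hmaj
    · exact (hgcont.mono (Ioi_subset_Ici le_rfl)).aestronglyMeasurable measurableSet_Ioi
    · rw [MeasureTheory.ae_restrict_iff' measurableSet_Ioi]
      apply Filter.Eventually.of_forall
      intro t ht
      have ht' : 0 < t := lt_trans ht₀pos ht
      have habt : ‖(t:ℂ)‖ = t := by
        rw [Complex.norm_real, Real.norm_eq_abs, abs_of_pos ht']
      have h1 := hdecay ↑t (by rw [habt]; exact le_of_lt ht)
      rw [habt] at h1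
      have e : t ^ (-2:ℝ) = (t ^ 2)⁻¹ := by
        rw [Real.rpow_neg ht'.le, show ((2:ℝ)) = ((2:ℕ):ℝ) by norm_num, Real.rpow_natCast]
      rw [e]
      calc ‖g ↑t‖ ≤ M / t ^ 2 := h1
      _ = M * (t ^ 2)⁻¹ := by ring
  set a₀ : ℂ := (f ↑r₁ - c * ↑r₁) + ∫ t in Ioi r₁, g ↑t with ha₀
  -- Step A : convergence along the positive real axis
  have htendA : Tendsto (fun x : ℝ => f ↑x - c * ↑x) atTop (nhds a₀) := by
    have h1 : Tendsto (fun x : ℝ => ∫ t in r₁..x, g ↑t) atTop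
        (nhds (∫ t in Ioi r₁, g ↑t)) :=
      MeasureTheory.intervalIntegral_tendsto_integral_Ioi r₁ hInt tendsto_id
    have h2 : Tendsto (fun x : ℝ => (f ↑r₁ - c * ↑r₁) + ∫ t in r₁..x, g ↑t) atTop
        (nhds a₀) := tendsto_const_nhds.add h1
    apply h2.congr'
    filter_upwards [eventually_ge_atTop r₁] with x hx
    have hsub : uIcc r₁ x ⊆ Ici r₁ := by
      rw [uIcc_of_le hx]
      exact Icc_subset_Ici_self
    have hFTC : ∫ t in r₁..x, g ↑t = (f ↑x - c * ↑x) - (f ↑r₁ - c * ↑r₁) := by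
      apply intervalIntegral.integral_eq_sub_of_hasDerivAt
      · intro t ht
        have htr : r₁ ≤ t := (hsub ht).out
        have htR : R < ‖(t:ℂ)‖ := by
          rw [Complex.norm_real, Real.norm_eq_abs, abs_of_pos (lt_of_lt_of_le ht₀pos htr)]
          exact lt_of_lt_of_le hr₁R htr
        exact (hh ↑t htR).comp_ofReal
      · exact (hgcont.mono hsub).intervalIntegrable
    rw [hFTC]
    ring
  -- Step B : comparison with the point |z| on the circle of radius |z|
  have hB : ∀ z : ℂ, r₁ ≤ ‖z‖ →
      ‖(f z - c * z) - (f ↑(‖z‖) - c * ↑(‖z‖))‖ ≤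
        Real.pi * M * (‖z‖)⁻¹ := by
    intro z hz
    set r : ℝ := ‖z‖ with hrdef
    have hrpos : 0 < r := lt_of_lt_of_le ht₀pos hz
    have hmemθ : ∀ θ : ℝ, R < ‖(circleMap 0 r θ)‖ := by
      intro θ
      rw [norm_circleMap_zero, abs_of_pos hrpos]
      exact lt_of_lt_of_le hr₁R hz
    have hderivθ : ∀ θ : ℝ, HasDerivAt (fun θ : ℝ => f (circleMap 0 r θ) - c * circleMap 0 r θ)
        ((circleMap 0 r θ * I) • g (circleMap 0 r θ)) θ := by
      intro θ
      exact (hh _ (hmemθ θ)).scomp θ (hasDerivAt_circleMap 0 r θ)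
    have hcont2 : ContinuousOn (fun θ : ℝ => (circleMap 0 r θ * I) • g (circleMap 0 r θ))
        (uIcc 0 (Complex.arg z)) := by
      apply ContinuousOn.smul (f := fun θ : ℝ => circleMap 0 r θ * I)
        (g := fun θ : ℝ => g (circleMap 0 r θ))
      · exact ((continuous_circleMap 0 r).mul continuous_const).continuousOn
      · intro θ _
        exact ((hgd _ (hmemθ θ)).continuousAt.comp
          (continuous_circleMap 0 r).continuousAt).continuousWithinAt
    have hFTC : ∫ θ in (0:ℝ)..(Complex.arg z), (circleMap 0 r θ * I) • g (circleMap 0 r θ) =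
        (f (circleMap 0 r (Complex.arg z)) - c * circleMap 0 r (Complex.arg z)) -
        (f (circleMap 0 r 0) - c * circleMap 0 r 0) := by
      apply intervalIntegral.integral_eq_sub_of_hasDerivAt (fun θ _ => hderivθ θ)
      exact hcont2.intervalIntegrable
    have hend1 : circleMap 0 r (Complex.arg z) = z := by
      simp only [circleMap, zero_add]
      exact Complex.norm_mul_exp_arg_mul_I z
    have hend0 : circleMap 0 r 0 = (r:ℂ) := by
      simp [circleMap]
    rw [hend1, hend0] at hFTC
    rw [← hFTC]
    have hbound : ∀ θ : ℝ,
        ‖(circleMap 0 r θ * I) • g (circleMap 0 r θ)‖ ≤ M / r := by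
      intro θ
      have h1 : ‖circleMap 0 r θ * I‖ = r := by
        rw [norm_mul, Complex.norm_I, mul_one, norm_circleMap_zero,
          abs_of_pos hrpos]
      have h2 : ‖g (circleMap 0 r θ)‖ ≤ M / r ^ 2 := by
        have := hdecay (circleMap 0 r θ) (by rw [norm_circleMap_zero, abs_of_pos hrpos]; exact hz)
        rwa [norm_circleMap_zero, abs_of_pos hrpos] at this
      rw [norm_smul, h1]
      calc r * ‖g (circleMap 0 r θ)‖ ≤ r * (M / r ^ 2) :=
        mul_le_mul_of_nonneg_left h2 hrpos.le
      _ = M / r := by field_simp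
    have hle := intervalIntegral.norm_integral_le_of_norm_le_const
      (C := M / r) (a := 0) (b := Complex.arg z) (fun θ _ => hbound θ)
    calc ‖∫ θ in (0:ℝ)..(Complex.arg z), (circleMap 0 r θ * I) • g (circleMap 0 r θ)‖
        ≤ M / r * |Complex.arg z - 0| := hle
    _ ≤ M / r * Real.pi := by
        apply mul_le_mul_of_nonneg_left _ (by positivity)
        rw [sub_zero]
        exact Complex.abs_arg_le_pi z
    _ = Real.pi * M * r⁻¹ := by field_simp
  -- assembling
  have habs_tendsto : Tendsto (fun z : ℂ => ‖z‖) (Bornology.cobounded ℂ) atTop := by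
    have := tendsto_norm_cobounded_atTop (E := ℂ)
    simpa using this
  have h2 : Tendsto (fun z : ℂ => f ↑(‖z‖) - c * ↑(‖z‖))
      (Bornology.cobounded ℂ) (nhds a₀) := htendA.comp habs_tendsto
  have h0 : Tendsto (fun z : ℂ => Real.pi * M * (‖z‖)⁻¹)
      (Bornology.cobounded ℂ) (nhds 0) := by
    have := habs_tendsto.inv_tendsto_atTop
    have h3 := this.const_mul (Real.pi * M)
    simpa using h3
  have h1 : Tendsto (fun z : ℂ => (f z - c * z) - (f ↑(‖z‖) - c * ↑(‖z‖)))
      (Bornology.cobounded ℂ) (nhds 0) := by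
    apply squeeze_zero_norm' _ h0
    filter_upwards [habs_tendsto.eventually_ge_atTop r₁] with z hz
    exact hB z hz
  refine ⟨a₀, ?_⟩
  have := h1.add h2
  rw [zero_add] at this
  exact this.congr fun z => by ring

end Aux
end

section
/- Let R > 0, let c ∈ ℂ with c ≠ 0, and let f : ℂ → ℂ be complex-differentiable at every point of A_R = {z ∈ ℂ : |z| > R}, with deriv f z → c as z → ∞. Then |f(z)| → ∞ as |z| → ∞, i.e. f tends to the cobounded filter along the cobounded filter: Tendsto f (Filter.cobounded ℂ) (Filter.cobounded ℂ). -/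
open Filter

/-- A function holomorphic on a neighborhood of infinity whose derivative tends to a
nonzero limit at infinity tends to infinity at infinity. -/
theorem tendsto_cobounded_of_deriv_tendsto (R : ℝ) (hR : 0 < R) (c : ℂ) (hc : c ≠ 0)
    (f : ℂ → ℂ) (hf : ∀ z : ℂ, R < ‖z‖ → DifferentiableAt ℂ f z)
    (hderiv : Tendsto (deriv f) (Bornology.cobounded ℂ) (nhds c)) :
    Tendsto f (Bornology.cobounded ℂ) (Bornology.cobounded ℂ) := by
  have hc' : (0:ℝ) < ‖c‖ := norm_pos_iff.2 hc
  -- get R₁ such that the derivative is (‖c‖/2)-close to c beyond R₁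
  have hev : ∀ᶠ z in Bornology.cobounded ℂ, ‖deriv f z - c‖ ≤ ‖c‖ / 2 := by
    have := hderiv (Metric.closedBall_mem_nhds c (by positivity : (0:ℝ) < ‖c‖/2))
    filter_upwards [this] with z hz
    simpa [Metric.mem_closedBall, dist_eq_norm] using hz
  rw [← comap_norm_atTop, eventually_comap] at hev
  obtain ⟨R₁, hR₁⟩ := eventually_atTop.1 hev
  set r : ℝ := max (max R₁ (R + 1)) 1 with hr_def
  have hrR : R < r := lt_of_lt_of_le (by linarith) (le_trans (le_max_right _ _) (le_max_left _ _))
  have hr1 : (1:ℝ) ≤ r := le_max_right _ _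
  have hr0 : (0:ℝ) < r := lt_of_lt_of_le one_pos hr1
  have hrR₁ : R₁ ≤ r := le_trans (le_max_left _ _) (le_max_left _ _)
  have hbound : ∀ w : ℂ, r ≤ ‖w‖ → ‖deriv f w - c‖ ≤ ‖c‖ / 2 := fun w hw =>
    hR₁ ‖w‖ (le_trans hrR₁ hw) w rfl
  have hdiff : ∀ w : ℂ, r ≤ ‖w‖ → DifferentiableAt ℂ f w := fun w hw =>
    hf w (lt_of_lt_of_le hrR (by simpa [Complex.norm_def] using hw))
  -- bound f on the sphere of radius r
  have hcont : ContinuousOn f (Metric.sphere (0:ℂ) r) := by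
    intro w hw
    have : ‖w‖ = r := by simpa [dist_eq_norm] using Metric.mem_sphere.1 hw
    exact ((hdiff w this.ge).continuousAt).continuousWithinAt
  obtain ⟨K, hK⟩ := (isCompact_sphere (0:ℂ) r).exists_bound_of_continuousOn hcont
  -- auxiliary function g = f - c z
  set g : ℂ → ℂ := fun w => f w - c * w with hg_def
  have hgdiff : ∀ w : ℂ, r ≤ ‖w‖ → DifferentiableAt ℂ g w := fun w hw =>
    (hdiff w hw).sub (differentiableAt_id.const_mul c)
  have hgderiv : ∀ w : ℂ, r ≤ ‖w‖ → ‖fderiv ℂ g w‖ ≤ ‖c‖ / 2 := by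
    intro w hw
    rw [← norm_deriv_eq_norm_fderiv]
    have h1 : HasDerivAt g (deriv f w - c) w := by
      exact ((hdiff w hw).hasDerivAt.sub ((hasDerivAt_id w).const_mul c)).congr_deriv (by simp)
    rw [h1.deriv]; exact hbound w hw
  -- main pointwise estimate
  have key : ∀ z : ℂ, r ≤ ‖z‖ →
      ‖c‖/2 * ‖z‖ - (K + ‖c‖ * r + ‖c‖/2 * r) ≤ ‖f z‖ := by
    intro z hz
    have hz0 : (0:ℝ) < ‖z‖ := lt_of_lt_of_le hr0 hz
    have hzne : z ≠ 0 := norm_pos_iff.1 hz0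
    set u : ℂ := (r / ‖z‖ : ℝ) • z with hu_def
    have hu_norm : ‖u‖ = r := by
      have hzne' : ‖z‖ ≠ 0 := by simpa using hz0.ne'
      rw [hu_def, norm_smul, Real.norm_eq_abs, abs_of_nonneg (by positivity)]
      field_simp
    -- every point of the segment [u, z] has norm ≥ r
    have hseg : ∀ w ∈ segment ℝ u z, r ≤ ‖w‖ := by
      intro w hw
      obtain ⟨a, b, ha, hb, hab, rfl⟩ := hw
      have : a • u + b • z = ((a * (r / ‖z‖) + b : ℝ)) • z := by
        rw [hu_def, smul_smul, add_smul]
      rw [this, norm_smul, Real.norm_eq_abs, abs_of_nonneg (by positivity)]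
      have : (a * (r / ‖z‖) + b) * ‖z‖ = a * r + b * ‖z‖ := by
        have hzne' : ‖z‖ ≠ 0 := by simpa using hz0.ne'
        field_simp
      rw [this]
      nlinarith [mul_le_mul_of_nonneg_left hz hb]
    -- mean value inequality on the segment
    have hmv : ‖g z - g u‖ ≤ ‖c‖/2 * ‖z - u‖ :=
      (convex_segment u z).norm_image_sub_le_of_norm_fderiv_le
        (fun w hw => hgdiff w (hseg w hw)) (fun w hw => hgderiv w (hseg w hw))
        (left_mem_segment ℝ u z) (right_mem_segment ℝ u z)
    have hzu : ‖z - u‖ ≤ ‖z‖ + r := by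
      calc ‖z - u‖ ≤ ‖z‖ + ‖u‖ := norm_sub_le _ _
      _ = ‖z‖ + r := by rw [hu_norm]
    have hgu : ‖g u‖ ≤ K + ‖c‖ * r := by
      have hu_mem : u ∈ Metric.sphere (0:ℂ) r := by
        simp [Metric.mem_sphere, dist_eq_norm, hu_norm]
      calc ‖g u‖ = ‖f u - c * u‖ := rfl
      _ ≤ ‖f u‖ + ‖c * u‖ := norm_sub_le _ _
      _ ≤ K + ‖c‖ * r := by
          have := hK u hu_mem
          rw [norm_mul, hu_norm]
          linarith
    have hgz : ‖g z‖ ≤ K + ‖c‖ * r + ‖c‖/2 * (‖z‖ + r) := by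
      calc ‖g z‖ = ‖g u + (g z - g u)‖ := by ring_nf
      _ ≤ ‖g u‖ + ‖g z - g u‖ := norm_add_le _ _
      _ ≤ (K + ‖c‖ * r) + ‖c‖/2 * (‖z‖ + r) := by
          have : ‖c‖/2 * ‖z - u‖ ≤ ‖c‖/2 * (‖z‖ + r) :=
            mul_le_mul_of_nonneg_left hzu (by positivity)
          linarith
    have hfz : ‖c‖ * ‖z‖ - ‖g z‖ ≤ ‖f z‖ := by
      have : ‖c * z‖ - ‖g z‖ ≤ ‖f z‖ := by
        have h1 : ‖c * z‖ ≤ ‖f z‖ + ‖g z‖ := by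
          calc ‖c * z‖ = ‖f z - g z‖ := by rw [hg_def]; ring_nf
          _ ≤ ‖f z‖ + ‖g z‖ := norm_sub_le _ _
        linarith
      simpa [norm_mul] using this
    nlinarith
  -- conclude
  rw [← tendsto_norm_atTop_iff_cobounded]
  have hlow : Tendsto (fun z : ℂ => ‖c‖/2 * ‖z‖ - (K + ‖c‖ * r + ‖c‖/2 * r))
      (Bornology.cobounded ℂ) atTop := by
    simp only [sub_eq_add_neg]
    apply tendsto_atTop_add_const_right
    exact (tendsto_norm_cobounded_atTop).const_mul_atTop (by positivity)
  exact tendsto_atTop_mono'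
    _ (by filter_upwards [eventually_cobounded_le_norm r] with z hz using key z hz) hlow
end

section
/- Let R > 0, let c ∈ ℂ with c ≠ 0, and let f : ℂ → ℂ be complex-differentiable at every point of A_R = {z ∈ ℂ : |z| > R}, with deriv f z → c as z → ∞. Then there exist ε > 0 and a function G : ℂ → ℂ that is complex-differentiable at every point of the open ball {z : |z| < ε}, satisfying G(0) = 0, deriv G 0 = c⁻¹, and G(z) = (f(z⁻¹))⁻¹ for all z with 0 < |z| < ε. (The classical inversion g(z) = 1/f(1/z) has a removable singularity at the origin, with nonzero derivative there.) -/
open Filter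

open Filter Metric Bornology Set

lemma ratio_tendsto_aux (R : ℝ) (hR : 0 < R) (c : ℂ) (f : ℂ → ℂ)
    (hf : ∀ z : ℂ, R < ‖z‖ → DifferentiableAt ℂ f z)
    (hderiv : Tendsto (deriv f) (cobounded ℂ) (nhds c)) :
    Tendsto (fun w : ℂ => f w / w) (cobounded ℂ) (nhds c) := by
  rw [Metric.tendsto_nhds]
  intro ε hε
  rw [Filter.hasBasis_cobounded_norm.eventually_iff]
  obtain ⟨R₁, -, hR₁⟩ := Filter.hasBasis_cobounded_norm.eventually_iff.mp
    (Metric.tendsto_nhds.mp hderiv (ε/4) (by positivity))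
  set R₂ : ℝ := max R (max R₁ 0) + 1 with hR₂def
  have hRR₂ : R < R₂ := lt_of_le_of_lt (le_max_left _ _) (lt_add_one _)
  have hR₁R₂ : R₁ < R₂ :=
    lt_of_le_of_lt ((le_max_left _ _).trans (le_max_right _ _)) (lt_add_one _)
  have hR₂pos : 0 < R₂ :=
    lt_of_le_of_lt ((le_max_right _ _).trans (le_max_right _ _)) (lt_add_one _)
  -- the auxiliary function
  set h : ℂ → ℂ := fun z => f z - c * z with hh
  have hca : ∀ x : ℂ, HasDerivAt (fun z : ℂ => c * z) c x := by
    intro x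
    simpa using (hasDerivAt_id x).const_mul c
  have hdiff : ∀ x : ℂ, R < ‖x‖ → DifferentiableAt ℂ h x := fun x hx =>
    (hf x hx).sub (hca x).differentiableAt
  have hderivh : ∀ x : ℂ, R₂ ≤ ‖x‖ → ‖deriv h x‖ ≤ ε / 4 := by
    intro x hx
    have hxR : R < ‖x‖ := lt_of_lt_of_le hRR₂ hx
    have hd : deriv h x = deriv f x - c :=
      (((hf x hxR).hasDerivAt.sub (hca x))).deriv
    rw [hd]
    have h2 := hR₁ (show x ∈ {x : ℂ | R₁ ≤ ‖x‖} from le_of_lt (lt_of_lt_of_le hR₁R₂ hx))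
    rw [dist_eq_norm] at h2
    linarith
  -- bound on the sphere
  have hcont : ContinuousOn h (sphere (0:ℂ) R₂) := by
    intro z hz
    have : ‖z‖ = R₂ := by simpa using hz
    exact ((hdiff z (by rw [this]; exact hRR₂)).continuousAt).continuousWithinAt
  obtain ⟨M, hM⟩ := (isCompact_sphere (0:ℂ) R₂).exists_bound_of_continuousOn hcont
  set M' : ℝ := max M 1 with hM'def
  have hM'pos : 0 < M' := lt_of_lt_of_le one_pos (le_max_right _ _)
  refine ⟨max (R₂ + 1) (4 * M' / ε), trivial, fun w hw => ?_⟩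
  have hwR₂ : R₂ + 1 ≤ ‖w‖ := le_trans (le_max_left _ _) hw
  have hwM : 4 * M' / ε ≤ ‖w‖ := le_trans (le_max_right _ _) hw
  have hwpos : 0 < ‖w‖ := by linarith
  have hw0 : w ≠ 0 := by
    intro h0; rw [h0] at hwpos; simp at hwpos
  set w₀ : ℂ := (R₂ / ‖w‖ : ℝ) • w with hw₀def
  have hw₀norm : ‖w₀‖ = R₂ := by
    rw [hw₀def, norm_smul, Real.norm_eq_abs, abs_of_pos (by positivity),
      div_mul_cancel₀ _ (ne_of_gt hwpos)]
  -- segment bound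
  have hseg : ∀ x ∈ segment ℝ w₀ w, R₂ ≤ ‖x‖ := by
    rintro x ⟨a, b, ha, hb, hab, rfl⟩
    rw [hw₀def, smul_smul, ← add_smul, norm_smul, Real.norm_eq_abs]
    have h1 : 0 ≤ a * (R₂ / ‖w‖) + b := by positivity
    rw [abs_of_nonneg h1]
    have habs : ‖w‖ ≠ 0 := by exact ne_of_gt hwpos
    have : (a * (R₂ / ‖w‖) + b) * ‖w‖ = a * R₂ + b * ‖w‖ := by
      field_simp
    rw [this]
    have : a * R₂ + b * R₂ ≤ a * R₂ + b * ‖w‖ := by nlinarith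
    nlinarith
  have hmvt : ‖h w - h w₀‖ ≤ ε / 4 * ‖w - w₀‖ :=
    (convex_segment w₀ w).norm_image_sub_le_of_norm_deriv_le
      (fun x hx => hdiff x (lt_of_lt_of_le hRR₂ (hseg x hx)))
      (fun x hx => hderivh x (hseg x hx))
      (left_mem_segment ℝ w₀ w) (right_mem_segment ℝ w₀ w)
  have hw₀M : ‖h w₀‖ ≤ M' := le_trans (hM w₀ (by simp [hw₀norm])) (le_max_left _ _)
  have hwdiff : ‖w - w₀‖ ≤ 2 * ‖w‖ := by
    calc ‖w - w₀‖ ≤ ‖w‖ + ‖w₀‖ := norm_sub_le _ _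
    _ ≤ 2 * ‖w‖ := by rw [hw₀norm]; linarith
  have hhw : ‖h w‖ ≤ M' + ε / 2 * ‖w‖ := by
    calc ‖h w‖ = ‖h w₀ + (h w - h w₀)‖ := by ring_nf
    _ ≤ ‖h w₀‖ + ‖h w - h w₀‖ := norm_add_le _ _
    _ ≤ M' + ε / 4 * (2 * ‖w‖) := by
        have := le_trans hmvt (by nlinarith : ε / 4 * ‖w - w₀‖ ≤ ε / 4 * (2 * ‖w‖))
        linarith
    _ = M' + ε / 2 * ‖w‖ := by ring
  rw [dist_eq_norm]
  have heq : f w / w - c = h w / w := by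
    rw [hh]
    field_simp
  rw [heq, norm_div]
  rw [div_lt_iff₀ hwpos]
  rw [div_le_iff₀ hε] at hwM
  nlinarith [mul_pos hε hwpos]

/-- The classical inversion `g z = 1 / f (1 / z)` of a function `f` holomorphic near
infinity whose derivative tends to a nonzero limit `c` at infinity has a removable
singularity at the origin: it extends to a function `G` holomorphic near `0` with
`G 0 = 0` and `deriv G 0 = c⁻¹ ≠ 0`. -/
theorem inversion_removable_singularity (R : ℝ) (hR : 0 < R) (c : ℂ) (hc : c ≠ 0)
    (f : ℂ → ℂ) (hf : ∀ z : ℂ, R < ‖z‖ → DifferentiableAt ℂ f z)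
    (hderiv : Tendsto (deriv f) (Bornology.cobounded ℂ) (nhds c)) :
    ∃ ε > (0 : ℝ), ∃ G : ℂ → ℂ,
      (∀ z : ℂ, ‖z‖ < ε → DifferentiableAt ℂ G z) ∧
      G 0 = 0 ∧ deriv G 0 = c⁻¹ ∧
      ∀ z : ℂ, 0 < ‖z‖ → ‖z‖ < ε → G z = (f z⁻¹)⁻¹ := by
  have hratio : Tendsto (fun w : ℂ => f w / w) (cobounded ℂ) (nhds c) :=
    ratio_tendsto_aux R hR c f hf hderiv
  -- `f` tends to infinity at infinity
  have hfw : Tendsto f (cobounded ℂ) (cobounded ℂ) := by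
    rw [← tendsto_norm_atTop_iff_cobounded]
    have h1 : Tendsto (fun w : ℂ => ‖f w / w‖ * ‖w‖) (cobounded ℂ) atTop :=
      Filter.Tendsto.pos_mul_atTop (by simpa using norm_pos_iff.mpr hc)
        (hratio.norm) tendsto_norm_cobounded_atTop
    refine h1.congr' ?_
    filter_upwards [eventually_cobounded_le_norm (1 : ℝ)] with w hw
    have hw0 : ‖w‖ ≠ 0 := by positivity
    rw [norm_div, div_mul_cancel₀ _ hw0]
  -- `f` is eventually nonzero
  obtain ⟨S₀, -, hS₀⟩ := Filter.hasBasis_cobounded_norm.eventually_iff.mp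
    (hfw.eventually (eventually_cobounded_le_norm (1 : ℝ)))
  set S₁ : ℝ := max (max S₀ R) 1 + 1 with hS₁def
  have hS₁pos : 0 < S₁ := by
    have : (1:ℝ) ≤ max (max S₀ R) 1 := le_max_right _ _
    linarith
  have hS₁R : R < S₁ := lt_of_le_of_lt ((le_max_right _ _).trans (le_max_left _ _)) (lt_add_one _)
  have hS₁S₀ : S₀ < S₁ :=
    lt_of_le_of_lt ((le_max_left _ _).trans (le_max_left _ _)) (lt_add_one _)
  set δ : ℝ := S₁⁻¹ with hδdef
  have hδpos : 0 < δ := by positivity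
  set g : ℂ → ℂ := fun z => (f z⁻¹)⁻¹ with hg
  set G : ℂ → ℂ := Function.update g 0 0 with hG
  -- differentiability of g on the small punctured ball
  have hkey : ∀ z : ℂ, z ≠ 0 → ‖z‖ < δ → S₁ < ‖z⁻¹‖ := by
    intro z hz0 hzδ
    rw [norm_inv]
    rw [hδdef] at hzδ
    have hz0' : 0 < ‖z‖ := norm_pos_iff.mpr hz0
    calc S₁ = (S₁⁻¹)⁻¹ := by rw [inv_inv]
    _ < ‖z‖⁻¹ := by
        apply inv_strictAnti₀ hz0' hzδ
  have hgdiff : ∀ z : ℂ, z ≠ 0 → ‖z‖ < δ → DifferentiableAt ℂ g z := by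
    intro z hz0 hzδ
    have hinv := hkey z hz0 hzδ
    have hfz : f z⁻¹ ≠ 0 := by
      intro h0
      have := hS₀ (show z⁻¹ ∈ {x : ℂ | S₀ ≤ ‖x‖} from le_of_lt (lt_trans hS₁S₀ hinv))
      rw [h0] at this
      simp at this
      linarith
    exact (((hf z⁻¹ (by exact lt_trans hS₁R hinv)).comp z
      (differentiableAt_inv hz0)).inv hfz)
  have hGeqg : ∀ z : ℂ, z ≠ 0 → G z = g z := fun z hz =>
    Function.update_of_ne hz _ _
  have hGdiff : ∀ z : ℂ, z ≠ 0 → ‖z‖ < δ → DifferentiableAt ℂ G z := by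
    intro z hz0 hzδ
    refine (hgdiff z hz0 hzδ).congr_of_eventuallyEq ?_
    filter_upwards [isOpen_ne.mem_nhds hz0] with y hy
    exact hGeqg y hy
  -- continuity at 0
  have hgtendsto : Tendsto g (nhdsWithin 0 {(0:ℂ)}ᶜ) (nhds 0) := by
    have : Tendsto (fun z : ℂ => f z⁻¹) (nhdsWithin 0 {(0:ℂ)}ᶜ) (cobounded ℂ) :=
      hfw.comp tendsto_inv₀_nhdsNE_zero
    exact tendsto_inv₀_cobounded.comp this
  have hGcont : ContinuousAt G 0 := by
    rw [hG, continuousAt_update_same]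
    exact hgtendsto
  -- removable singularity
  have hGanalytic : AnalyticAt ℂ G 0 := by
    apply Complex.analyticAt_of_differentiable_on_punctured_nhds_of_continuousAt _ hGcont
    have hmem : {z : ℂ | ‖z‖ < δ} ∈ nhdsWithin (0:ℂ) {(0:ℂ)}ᶜ := by
      apply mem_nhdsWithin_of_mem_nhds
      have : {z : ℂ | ‖z‖ < δ} = Metric.ball 0 δ := by
        ext z; simp [Metric.mem_ball, dist_eq_norm]
      rw [this]
      exact Metric.ball_mem_nhds 0 hδpos
    filter_upwards [hmem, self_mem_nhdsWithin] with z hz1 hz2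
    exact hGdiff z hz2 hz1
  obtain ⟨r, hrpos, hr⟩ := Metric.eventually_nhds_iff.mp
    (hGanalytic.eventually_analyticAt.mono (fun y hy => hy.differentiableAt))
  refine ⟨min r δ, lt_min hrpos hδpos, G, ?_, Function.update_self _ _ _, ?_, ?_⟩
  · intro z hz
    apply hr
    rw [dist_eq_norm, sub_zero] at *
    exact lt_of_lt_of_le hz (min_le_left _ _)
  · -- deriv G 0 = c⁻¹
    have hGd : HasDerivAt G (deriv G 0) 0 :=
      (hr (show dist (0:ℂ) 0 < r by simpa using hrpos)).hasDerivAt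
    rw [hasDerivAt_iff_tendsto_slope] at hGd
    have hslope : Tendsto (slope G 0) (nhdsWithin 0 {(0:ℂ)}ᶜ) (nhds c⁻¹) := by
      have h1 : Tendsto (fun z : ℂ => (f z⁻¹ / z⁻¹)⁻¹) (nhdsWithin 0 {(0:ℂ)}ᶜ) (nhds c⁻¹) :=
        (hratio.inv₀ hc).comp tendsto_inv₀_nhdsNE_zero
      refine h1.congr' ?_
      filter_upwards [self_mem_nhdsWithin] with z hz
      have hz0 : z ≠ 0 := hz
      rw [slope_def_field, hGeqg z hz0, hG, Function.update_self, hg]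
      simp only [sub_zero]
      rw [inv_div, div_eq_mul_inv, div_eq_mul_inv, mul_comm]
    exact tendsto_nhds_unique hGd hslope
  · intro z hz0 hzε
    exact hGeqg z (by rw [norm_pos_iff] at hz0; exact hz0)
end

section
/- Let R > 0 and let h : ℂ → ℂ be complex-differentiable at every point of A_R = {z ∈ ℂ : |z| > R}, and suppose h is even on A_R, i.e. h(−z) = h(z) for all z with |z| > R. Then h has a global primitive on A_R: there exists f : ℂ → ℂ such that for every z with |z| > R, f has derivative h(z) at z (HasDerivAt f (h z) z). (An even holomorphic function on a neighborhood of infinity has vanishing residue at infinity, hence admits a single-valued primitive there; this expresses the trivial monodromy of a metric quadrupole.) -/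
open Complex intervalIntegral Set

noncomputable def Phi (a : ℝ) (φ : ℂ → ℂ) (w : ℂ) : ℂ :=
  (∫ x : ℝ in (a+1)..w.re, φ (x + (0:ℝ) * I)) + I * ∫ y : ℝ in (0:ℝ)..w.im, φ (w.re + y * I)

lemma intH {a : ℝ} {φ : ℂ → ℂ} (hφ : ∀ w : ℂ, a < w.re → DifferentiableAt ℂ φ w)
    (c c' d : ℝ) (hc : a < c) (hc' : a < c') :
    IntervalIntegrable (fun x : ℝ => φ (x + (d:ℝ) * I)) MeasureTheory.volume c c' := by
  apply ContinuousOn.intervalIntegrable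
  intro x hx
  have hax : a < x := lt_of_lt_of_le (lt_min hc hc') hx.1
  have h1 : DifferentiableAt ℂ φ (x + (d:ℝ) * I) := hφ _ (by simp [hax])
  have h2 : ContinuousAt (fun x : ℝ => (x : ℂ) + (d:ℝ) * I) x := by fun_prop
  exact ContinuousWithinAt.mono (ContinuousAt.continuousWithinAt (s:=Set.univ) (ContinuousAt.comp h1.continuousAt h2)) (by intro _ _; trivial)

lemma intV {a : ℝ} {φ : ℂ → ℂ} (hφ : ∀ w : ℂ, a < w.re → DifferentiableAt ℂ φ w)
    (c d d' : ℝ) (hc : a < c) :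
    IntervalIntegrable (fun y : ℝ => φ ((c:ℝ) + y * I)) MeasureTheory.volume d d' := by
  apply ContinuousOn.intervalIntegrable
  intro y _
  have h1 : DifferentiableAt ℂ φ ((c:ℝ) + y * I) := hφ _ (by simp [hc])
  have h2 : ContinuousAt (fun y : ℝ => (c : ℂ) + (y:ℝ) * I) y := by fun_prop
  exact ContinuousWithinAt.mono (ContinuousAt.continuousWithinAt (s:=Set.univ) (ContinuousAt.comp h1.continuousAt h2)) (by intro _ _; trivial)

lemma Phi_sub {a : ℝ} {φ : ℂ → ℂ} (hφ : ∀ w : ℂ, a < w.re → DifferentiableAt ℂ φ w)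
    (p q : ℂ) (hp : a < p.re) (hq : a < q.re) :
    Phi a φ q - Phi a φ p =
      (∫ x : ℝ in p.re..q.re, φ (x + p.im * I)) + I * ∫ y : ℝ in p.im..q.im, φ (q.re + y * I) := by
  have ha1 : a < a + 1 := by linarith
  have hrect := integral_boundary_rect_eq_zero_of_differentiableOn φ (p.re : ℂ)
      ((q.re : ℂ) + p.im * I) ?_
  · have e1 : (∫ x : ℝ in (a+1)..q.re, φ (x + (0:ℝ) * I))
        = (∫ x : ℝ in (a+1)..p.re, φ (x + (0:ℝ) * I)) + ∫ x : ℝ in p.re..q.re, φ (x + (0:ℝ) * I) :=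
      (integral_add_adjacent_intervals (intH hφ _ _ _ ha1 hp) (intH hφ _ _ _ hp hq)).symm
    have e2 : (∫ y : ℝ in (0:ℝ)..q.im, φ ((q.re:ℝ) + y * I))
        = (∫ y : ℝ in (0:ℝ)..p.im, φ ((q.re:ℝ) + y * I))
          + ∫ y : ℝ in p.im..q.im, φ ((q.re:ℝ) + y * I) :=
      (integral_add_adjacent_intervals (intV hφ _ _ _ hq) (intV hφ _ _ _ hq)).symm
    simp only [Complex.add_re, Complex.add_im, Complex.ofReal_re, Complex.ofReal_im,
      Complex.mul_re, Complex.mul_im, Complex.I_re, Complex.I_im, smul_eq_mul,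
      mul_zero, mul_one, zero_mul, sub_zero, add_zero, zero_add, zero_sub, sub_self] at hrect
    simp only [Phi]
    rw [e1, e2]
    simp only [Complex.ofReal_zero, zero_mul, add_zero] at hrect ⊢
    linear_combination hrect
  · intro u hu
    rw [Complex.mem_reProdIm] at hu
    have : a < u.re := by
      rcases hu with ⟨h1, _⟩
      have : min p.re ((q.re:ℂ) + p.im*I).re ≤ u.re := by
        rw [Set.uIcc] at h1; exact h1.1
      simp only [Complex.add_re, Complex.ofReal_re, Complex.mul_re, Complex.I_re,
        Complex.ofReal_im, Complex.I_im, mul_zero, mul_one, zero_sub, sub_zero] at this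
      have : min p.re q.re ≤ u.re := by
        convert this using 2; simp [Complex.ofReal_re]
      exact lt_of_lt_of_le (lt_min hp hq) this
    exact (hφ u this).differentiableWithinAt

lemma Phi_hasDerivAt {a : ℝ} {φ : ℂ → ℂ} (hφ : ∀ w : ℂ, a < w.re → DifferentiableAt ℂ φ w)
    (w : ℂ) (hw : a < w.re) : HasDerivAt (Phi a φ) (φ w) w := by
  rw [hasDerivAt_iff_isLittleO, Asymptotics.isLittleO_iff]
  intro ε hε
  have hε2 : 0 < ε / 2 := by linarith
  -- choose δ
  have hcont : ContinuousAt φ w := (hφ w hw).continuousAt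
  rcases Metric.continuousAt_iff.mp hcont (ε/2) hε2 with ⟨δ₀, hδ₀, hball⟩
  set δ : ℝ := min (δ₀ / 2) ((w.re - a) / 2) with hδdef
  have hδpos : 0 < δ := by
    apply lt_min (by linarith) (by linarith)
  have key : ∀ w' : ℂ, dist w' w < δ →
      ‖Phi a φ w' - Phi a φ w - (w' - w) • φ w‖ ≤ ε * ‖w' - w‖ := by
    intro w' hw'
    have hd : dist w' w < δ := hw'
    rw [Complex.dist_eq] at hd
    have habs : ‖w' - w‖ < δ := hd
    have hre : |w'.re - w.re| ≤ ‖w' - w‖ := by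
      simpa using Complex.abs_re_le_norm (w' - w)
    have him : |w'.im - w.im| ≤ ‖w' - w‖ := by
      simpa using Complex.abs_im_le_norm (w' - w)
    have hw're : a < w'.re := by
      have := abs_lt.mp (lt_of_le_of_lt hre habs)
      have hδle : δ ≤ (w.re - a)/2 := min_le_right _ _
      nlinarith [this.1]
    rw [Phi_sub hφ w w' hw hw're]
    set A := ∫ x : ℝ in w.re..w'.re, (φ (x + w.im * I) - φ w) with hA
    set B := ∫ y : ℝ in w.im..w'.im, (φ (w'.re + y * I) - φ w) with hB
    have hsplit : (∫ x : ℝ in w.re..w'.re, φ (x + w.im * I))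
        + I * (∫ y : ℝ in w.im..w'.im, φ (w'.re + y * I)) - (w' - w) • φ w = A + I * B := by
      have h1 : A = (∫ x : ℝ in w.re..w'.re, φ (x + w.im * I))
          - ((w'.re - w.re : ℝ) : ℂ) * φ w := by
        rw [hA, intervalIntegral.integral_sub (intH hφ _ _ _ hw hw're)
          intervalIntegrable_const, intervalIntegral.integral_const, Complex.real_smul]
      have h2 : B = (∫ y : ℝ in w.im..w'.im, φ (w'.re + y * I))
          - ((w'.im - w.im : ℝ) : ℂ) * φ w := by
        rw [hB, intervalIntegral.integral_sub (intV hφ _ _ _ hw're)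
          intervalIntegrable_const, intervalIntegral.integral_const, Complex.real_smul]
      have h3 : w' - w = ((w'.re - w.re : ℝ) : ℂ) + ((w'.im - w.im : ℝ) : ℂ) * I := by
        have := (Complex.re_add_im (w' - w)).symm
        simpa [Complex.sub_re, Complex.sub_im] using this
      rw [h1, h2, smul_eq_mul, h3]; ring
    rw [hsplit]
    have hδ1 : δ ≤ δ₀ / 2 := min_le_left _ _
    have hnA : ‖A‖ ≤ ε / 2 * ‖w' - w‖ := by
      have := intervalIntegral.norm_integral_le_of_norm_le_const
        (C := ε/2) (f := fun x : ℝ => φ (x + w.im * I) - φ w) (a := w.re) (b := w'.re) ?_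
      · refine le_trans this ?_
        have : |w'.re - w.re| ≤ ‖w' - w‖ := hre
        have hh : (0:ℝ) ≤ ε/2 := le_of_lt hε2
        calc ε/2 * |w'.re - w.re| ≤ ε/2 * ‖w' - w‖ := by gcongr
          _ = ε/2 * ‖w' - w‖ := rfl
      · intro x hx
        apply le_of_lt
        rw [← dist_eq_norm]
        apply hball
        rw [Complex.dist_eq]
        have hxx : |x - w.re| ≤ |w'.re - w.re| := by
          have hp := le_abs_self (w'.re - w.re)
          have hq := neg_abs_le (w'.re - w.re)
          have hn := abs_nonneg (w'.re - w.re)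
          rw [abs_le]
          rcases Set.mem_uIoc.mp hx with ⟨h1, h2⟩ | ⟨h1, h2⟩ <;> constructor <;> linarith
        have heq : ‖(x : ℂ) + w.im * I - w‖ = |x - w.re| := by
          have : (x : ℂ) + w.im * I - w = ((x - w.re : ℝ) : ℂ) := by
            apply Complex.ext <;> simp
          rw [this, Complex.norm_real, Real.norm_eq_abs]
        rw [heq]
        calc |x - w.re| ≤ |w'.re - w.re| := hxx
          _ ≤ ‖w' - w‖ := hre
          _ < δ := habs
          _ ≤ δ₀/2 := hδ1
          _ < δ₀ := by linarith
    have hnB : ‖B‖ ≤ ε / 2 * ‖w' - w‖ := by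
      have := intervalIntegral.norm_integral_le_of_norm_le_const
        (C := ε/2) (f := fun y : ℝ => φ (w'.re + y * I) - φ w) (a := w.im) (b := w'.im) ?_
      · refine le_trans this ?_
        have : |w'.im - w.im| ≤ ‖w' - w‖ := him
        gcongr
      · intro y hy
        apply le_of_lt
        rw [← dist_eq_norm]
        apply hball
        rw [Complex.dist_eq]
        have hyy : |y - w.im| ≤ |w'.im - w.im| := by
          have hp := le_abs_self (w'.im - w.im)
          have hq := neg_abs_le (w'.im - w.im)
          have hn := abs_nonneg (w'.im - w.im)
          rw [abs_le]
          rcases Set.mem_uIoc.mp hy with ⟨h1, h2⟩ | ⟨h1, h2⟩ <;> constructor <;> linarith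
        have heq : (w'.re : ℂ) + y * I - w = ((w'.re - w.re : ℝ) : ℂ) + ((y - w.im : ℝ) : ℂ) * I := by
          apply Complex.ext <;> simp
        calc ‖(w'.re : ℂ) + y * I - w‖
            ≤ |w'.re - w.re| + |y - w.im| := by
              rw [heq]
              refine le_trans (norm_add_le _ _) ?_
              simp [← Complex.ofReal_sub, Complex.norm_real, Real.norm_eq_abs]
          _ ≤ ‖w' - w‖ + ‖w' - w‖ := by
              have h5 : |y - w.im| ≤ ‖w' - w‖ := le_trans hyy him
              linarith [hre]
          _ < δ + δ := by linarith
          _ ≤ δ₀ := by linarith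
    calc ‖A + I * B‖ ≤ ‖A‖ + ‖I * B‖ := norm_add_le _ _
      _ = ‖A‖ + ‖B‖ := by simp
      _ ≤ ε/2 * ‖w' - w‖ + ε/2 * ‖w' - w‖ := by linarith
      _ = ε * ‖w' - w‖ := by ring
  filter_upwards [Metric.ball_mem_nhds w hδpos] with w' hw'
  exact key w' hw'

lemma Phi_periodic {a : ℝ} {φ : ℂ → ℂ} (hφ : ∀ w : ℂ, a < w.re → DifferentiableAt ℂ φ w)
    (hanti : ∀ w : ℂ, a < w.re → φ (w + Real.pi * I) = -φ w)
    (w : ℂ) (hw : a < w.re) : Phi a φ (w + 2 * Real.pi * I) = Phi a φ w := by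
  set q : ℂ := w + 2 * Real.pi * I with hq
  set g : ℝ → ℂ := fun y => φ ((w.re : ℝ) + y * I) with hg
  have hqre : q.re = w.re := by simp [hq]
  have hqim : q.im = w.im + 2 * Real.pi := by simp [hq]
  have key := Phi_sub hφ w q hw (by rw [hqre]; exact hw)
  rw [hqre, hqim, intervalIntegral.integral_same] at key
  have h2 : w.im + 2 * Real.pi = w.im + Real.pi + Real.pi := by ring
  rw [h2] at key
  have hsplit : (∫ y : ℝ in w.im..(w.im + Real.pi + Real.pi), g y)
      = (∫ y : ℝ in w.im..(w.im + Real.pi), g y)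
        + ∫ y : ℝ in (w.im + Real.pi)..(w.im + Real.pi + Real.pi), g y :=
    (integral_add_adjacent_intervals (intV hφ _ _ _ hw) (intV hφ _ _ _ hw)).symm
  have hshift : (∫ y : ℝ in (w.im + Real.pi)..(w.im + Real.pi + Real.pi), g y)
      = ∫ y : ℝ in w.im..(w.im + Real.pi), g (y + Real.pi) := by
    rw [intervalIntegral.integral_comp_add_right g Real.pi]
  have hneg : (∫ y : ℝ in w.im..(w.im + Real.pi), g (y + Real.pi))
      = - ∫ y : ℝ in w.im..(w.im + Real.pi), g y := by
    rw [← intervalIntegral.integral_neg]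
    apply intervalIntegral.integral_congr
    intro y _
    have h1 : ((w.re : ℂ) + ((y + Real.pi : ℝ) : ℂ) * I) = ((w.re : ℂ) + y * I) + Real.pi * I := by
      push_cast; ring
    simp only [hg, h1]
    rw [hanti _ (by simp [hw])]
  rw [hsplit, hshift, hneg] at key
  simp at key
  rw [hq] at key
  exact sub_eq_zero.mp (by rw [hq]; linear_combination key)

lemma Phi_int_periodic {a : ℝ} {φ : ℂ → ℂ} (hφ : ∀ w : ℂ, a < w.re → DifferentiableAt ℂ φ w)
    (hanti : ∀ w : ℂ, a < w.re → φ (w + Real.pi * I) = -φ w)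
    (n : ℤ) (w : ℂ) (hw : a < w.re) :
    Phi a φ (w + n * (2 * Real.pi * I)) = Phi a φ w := by
  induction n using Int.induction_on with
  | zero => simp
  | succ k ih =>
      have hper := Phi_periodic hφ hanti (w + (k:ℂ) * (2 * Real.pi * I)) (by simpa using hw)
      push_cast at ih hper ⊢
      rw [← ih, ← hper]
      congr 1
      ring
  | pred k ih =>
      have hper := Phi_periodic hφ hanti (w + (-(k:ℂ) - 1) * (2 * Real.pi * I)) (by simpa using hw)
      push_cast at ih hper ⊢
      rw [← ih, ← hper]
      congr 1
      ring

/-- An even holomorphic function on a neighborhood of infinity has vanishing residue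
at infinity, hence admits a single-valued primitive there. -/
theorem even_holomorphic_has_primitive_near_infinity (R : ℝ) (hR : 0 < R) (h : ℂ → ℂ)
    (hdiff : ∀ z : ℂ, R < ‖z‖ → DifferentiableAt ℂ h z)
    (heven : ∀ z : ℂ, R < ‖z‖ → h (-z) = h z) :
    ∃ f : ℂ → ℂ, ∀ z : ℂ, R < ‖z‖ → HasDerivAt f (h z) z := by
  set a : ℝ := Real.log R with ha
  set φ : ℂ → ℂ := fun w => Complex.exp w * h (Complex.exp w) with hφdef
  have hexp_abs : ∀ w : ℂ, a < w.re → R < ‖Complex.exp w‖ := by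
    intro w hw
    rw [Complex.norm_exp]
    calc R = Real.exp (Real.log R) := (Real.exp_log hR).symm
      _ < Real.exp w.re := Real.exp_lt_exp.mpr hw
  have hφ : ∀ w : ℂ, a < w.re → DifferentiableAt ℂ φ w := by
    intro w hw
    exact (Complex.differentiable_exp.differentiableAt).mul
      ((hdiff _ (hexp_abs w hw)).comp w Complex.differentiable_exp.differentiableAt)
  have hanti : ∀ w : ℂ, a < w.re → φ (w + Real.pi * I) = -φ w := by
    intro w hw
    have he : Complex.exp (w + Real.pi * I) = -Complex.exp w := by
      rw [Complex.exp_add, Complex.exp_pi_mul_I]; ring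
    simp only [hφdef, he]
    rw [heven _ (hexp_abs w hw)]
    ring
  refine ⟨fun z => Phi a φ (Complex.log z), ?_⟩
  intro z₀ hz₀
  have hz₀ne : z₀ ≠ 0 := by
    intro hz; rw [hz] at hz₀; simp at hz₀; linarith
  set w₀ : ℂ := Complex.log z₀ with hw₀
  have hw₀re : a < w₀.re := by
    rw [hw₀, Complex.log_re, ha]
    exact Real.log_lt_log hR hz₀
  have hexpw₀ : Complex.exp w₀ = z₀ := Complex.exp_log hz₀ne
  set L : ℂ → ℂ := fun z => w₀ + Complex.log (z / z₀) with hL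
  set U : Set ℂ := {z : ℂ | R < ‖z‖} ∩ ((fun z => z / z₀) ⁻¹' Metric.ball (1:ℂ) 1)
    with hU
  have hUopen : IsOpen U := by
    apply IsOpen.inter
    · exact isOpen_lt continuous_const continuous_norm
    · exact Metric.isOpen_ball.preimage (by fun_prop)
  have hz₀U : z₀ ∈ U := by
    constructor
    · exact hz₀
    · simp [hz₀ne, div_self]
  have hUnhds : U ∈ nhds z₀ := hUopen.mem_nhds hz₀U
  -- properties on U
  have hball_slit : ∀ u : ℂ, u ∈ Metric.ball (1:ℂ) 1 → u ∈ Complex.slitPlane := by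
    intro u hu
    rw [Metric.mem_ball, Complex.dist_eq] at hu
    apply Complex.mem_slitPlane_iff.mpr
    left
    have h1 : |(u - 1).re| ≤ ‖u - 1‖ := Complex.abs_re_le_norm _
    have h2 : (u - 1).re = u.re - 1 := by simp
    have := neg_abs_le (u - 1).re
    nlinarith [abs_nonneg (u-1).re]
  have hUprop : ∀ z ∈ U, Complex.exp (L z) = z ∧ a < (L z).re := by
    intro z hz
    rcases hz with ⟨hz1, hz2⟩
    have hzne : z ≠ 0 := by
      intro hzz; rw [hzz] at hz1; simp at hz1; linarith
    have hdivne : z / z₀ ≠ 0 := div_ne_zero hzne hz₀ne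
    have hexpL : Complex.exp (L z) = z := by
      rw [hL]
      simp only
      rw [Complex.exp_add, hexpw₀, Complex.exp_log hdivne]
      field_simp
    refine ⟨hexpL, ?_⟩
    have habs : ‖Complex.exp (L z)‖ = ‖z‖ := by rw [hexpL]
    rw [Complex.norm_exp] at habs
    have : (L z).re = Real.log (‖z‖) := by
      rw [← habs, Real.log_exp]
    rw [this, ha]
    exact Real.log_lt_log hR hz1
  have hagree : ∀ z ∈ U, Phi a φ (Complex.log z) = Phi a φ (L z) := by
    intro z hz
    obtain ⟨hexpL, hLre⟩ := hUprop z hz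
    have hzne : z ≠ 0 := by
      intro hzz
      have h1 := hz.1
      rw [hzz] at h1
      simp at h1
      linarith
    have hzexp : Complex.exp (Complex.log z) = Complex.exp (L z) := by
      rw [Complex.exp_log hzne, hexpL]
    obtain ⟨n, hn⟩ := Complex.exp_eq_exp_iff_exists_int.mp hzexp
    rw [hn]
    exact Phi_int_periodic hφ hanti n (L z) hLre
  have hLz₀ : L z₀ = w₀ := by simp [hL, div_self hz₀ne, Complex.log_one]
  have hLderiv : HasDerivAt L z₀⁻¹ z₀ := by
    have h1 : HasDerivAt (fun z : ℂ => z / z₀) (1 / z₀) z₀ := by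
      simpa using (hasDerivAt_id z₀).div_const z₀
    have h2 : HasDerivAt Complex.log (z₀/z₀)⁻¹ (z₀ / z₀) :=
      Complex.hasDerivAt_log (by rw [div_self hz₀ne]; exact Complex.one_mem_slitPlane)
    have h3 : HasDerivAt (fun z : ℂ => Complex.log (z / z₀)) ((z₀/z₀)⁻¹ * (1/z₀)) z₀ :=
      HasDerivAt.comp (h := fun z : ℂ => z / z₀) (h₂ := Complex.log) z₀ h2 h1
    have h4 : (z₀ / z₀)⁻¹ * (1 / z₀) = z₀⁻¹ := by
      rw [div_self hz₀ne]; simp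
    rw [h4] at h3
    exact h3.const_add w₀
  have hPhiDeriv : HasDerivAt (Phi a φ) (φ w₀) (L z₀) := by
    rw [hLz₀]; exact Phi_hasDerivAt hφ w₀ hw₀re
  have hcomp : HasDerivAt (fun z => Phi a φ (L z)) (φ w₀ * z₀⁻¹) z₀ :=
    hPhiDeriv.comp z₀ hLderiv
  have hval : φ w₀ * z₀⁻¹ = h z₀ := by
    rw [hφdef]
    simp only [hexpw₀]
    field_simp
  rw [hval] at hcomp
  apply hcomp.congr_of_eventuallyEq
  filter_upwards [hUnhds] with z hz using (hagree z hz)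
end

section
/- Let β ∈ ℝ and z₁, z₂ ∈ ℂ. Then there exist R > 0 and a function f : ℂ → ℂ such that: (i) for every z ∈ ℂ with |z| > R, f has derivative Complex.exp((2β : ℂ) · Complex.log((z² − z₁²)/(z² − z₂²))) at z; and (ii) there exists R' ≥ R such that f is injective on {z ∈ ℂ : |z| > R'}. (The developing map of the metric quadrupole with complexified conformal factor ρ_ℂ(z) = 2β log((z−z₁)(z+z₁)/((z−z₂)(z+z₂))) is single-valued and one-to-one in a neighborhood of infinity; this is the complex-analytic content of the theorem that a two-dimensional quadrupole defect, such as the Stone–Wales defect, is purely local.) -/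
open Complex Metric Finset

section QuadAux

variable (z₁ z₂ : ℂ)

/-- The large radius. -/
noncomputable def quadR0 : ℝ := 2 * (max (‖z₁‖) (‖z₂‖) + 1)

lemma quadR0_pos : 0 < quadR0 z₁ z₂ := by
  have h : 0 ≤ max (‖z₁‖) (‖z₂‖) :=
    le_max_of_le_left (norm_nonneg _)
  unfold quadR0; nlinarith

/-- The ratio, as a function of `w = 1/z`. -/
noncomputable def quadQ (w : ℂ) : ℂ := (1 - z₁ ^ 2 * w ^ 2) / (1 - z₂ ^ 2 * w ^ 2)

/-- The complexified conformal factor exponential, in the variable `w = 1/z`. -/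
noncomputable def quadPhi (β : ℝ) (w : ℂ) : ℂ :=
  Complex.exp ((2 * (β : ℂ)) * Complex.log (quadQ z₁ z₂ w))

lemma quad_sq_bound {c : ℂ} (hc : ‖c‖ ≤ max (‖z₁‖) (‖z₂‖))
    {w : ℂ} (hw : ‖w‖ ≤ (quadR0 z₁ z₂)⁻¹) :
    ‖c ^ 2 * w ^ 2‖ ≤ 1 / 4 := by
  set M := max (‖z₁‖) (‖z₂‖) with hM
  have hM0 : 0 ≤ M := le_max_of_le_left (norm_nonneg _)
  have h1 : ‖c * w‖ ≤ 1 / 2 := by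
    have h2 : ‖c * w‖ ≤ M * (2 * (M + 1))⁻¹ := by
      rw [norm_mul]
      exact mul_le_mul hc hw (norm_nonneg _) hM0
    have h3 : M * (2 * (M + 1))⁻¹ ≤ 1 / 2 := by
      rw [mul_inv_le_iff₀ (by positivity)]; nlinarith
    linarith
  have : c ^ 2 * w ^ 2 = (c * w) ^ 2 := by ring
  rw [this, norm_pow]
  nlinarith [norm_nonneg (c * w)]

lemma quad_den_lb {w : ℂ} (hw : ‖w‖ ≤ (quadR0 z₁ z₂)⁻¹) :
    3 / 4 ≤ ‖1 - z₂ ^ 2 * w ^ 2‖ := by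
  have h := quad_sq_bound z₁ z₂ (le_max_right _ _) hw
  have h2 : ‖(1:ℂ)‖ - ‖z₂ ^ 2 * w ^ 2‖ ≤ ‖1 - z₂ ^ 2 * w ^ 2‖ := norm_sub_norm_le _ _
  simp only [norm_one] at h2
  linarith

lemma quad_den_ne {w : ℂ} (hw : ‖w‖ ≤ (quadR0 z₁ z₂)⁻¹) :
    1 - z₂ ^ 2 * w ^ 2 ≠ 0 := by
  intro h
  have := quad_den_lb z₁ z₂ hw
  rw [h] at this; simp at this; linarith

lemma quad_q_sub_one {w : ℂ} (hw : ‖w‖ ≤ (quadR0 z₁ z₂)⁻¹) :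
    ‖quadQ z₁ z₂ w - 1‖ ≤ 2 / 3 := by
  have hne := quad_den_ne z₁ z₂ hw
  have hq : quadQ z₁ z₂ w - 1 = ((z₂ ^ 2 - z₁ ^ 2) * w ^ 2) / (1 - z₂ ^ 2 * w ^ 2) := by
    unfold quadQ; rw [div_sub_one hne]; ring
  rw [hq, norm_div]
  have h1 := quad_sq_bound z₁ z₂ (le_max_left _ _) hw
  have h2 := quad_sq_bound z₁ z₂ (le_max_right _ _) hw
  have hnum : ‖(z₂ ^ 2 - z₁ ^ 2) * w ^ 2‖ ≤ 1 / 2 := by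
    have : (z₂ ^ 2 - z₁ ^ 2) * w ^ 2 = z₂ ^ 2 * w ^ 2 - z₁ ^ 2 * w ^ 2 := by ring
    rw [this]
    calc ‖z₂ ^ 2 * w ^ 2 - z₁ ^ 2 * w ^ 2‖
        ≤ ‖z₂ ^ 2 * w ^ 2‖ + ‖z₁ ^ 2 * w ^ 2‖ :=
          norm_sub_le _ _
      _ ≤ 1 / 2 := by linarith
  have hden := quad_den_lb z₁ z₂ hw
  rw [div_le_iff₀ (by linarith)]
  nlinarith

lemma quad_q_slit {w : ℂ} (hw : ‖w‖ ≤ (quadR0 z₁ z₂)⁻¹) :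
    quadQ z₁ z₂ w ∈ Complex.slitPlane := by
  have h := quad_q_sub_one z₁ z₂ hw
  have h2 : |(quadQ z₁ z₂ w - 1).re| ≤ ‖quadQ z₁ z₂ w - 1‖ :=
    Complex.abs_re_le_norm _
  have h3 : (quadQ z₁ z₂ w - 1).re = (quadQ z₁ z₂ w).re - 1 := by simp
  refine Or.inl ?_
  have h4 := neg_abs_le (quadQ z₁ z₂ w - 1).re
  linarith

lemma quad_phi_diffAt (β : ℝ) {w : ℂ} (hw : ‖w‖ ≤ (quadR0 z₁ z₂)⁻¹) :
    DifferentiableAt ℂ (quadPhi z₁ z₂ β) w := by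
  have hq : DifferentiableAt ℂ (quadQ z₁ z₂) w := by
    apply DifferentiableAt.div
    · fun_prop
    · fun_prop
    · exact quad_den_ne z₁ z₂ hw
  exact (((hq.clog (quad_q_slit z₁ z₂ hw)).const_mul _).cexp)

lemma quad_phi_zero (β : ℝ) : quadPhi z₁ z₂ β 0 = 1 := by
  unfold quadPhi quadQ
  norm_num

lemma quad_phi_deriv0 (β : ℝ) : HasDerivAt (quadPhi z₁ z₂ β) 0 0 := by
  have hslit : quadQ z₁ z₂ 0 ∈ Complex.slitPlane := by
    apply quad_q_slit
    simp [inv_nonneg.mpr (quadR0_pos z₁ z₂).le]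
  have hn : HasDerivAt (fun w : ℂ => 1 - z₁ ^ 2 * w ^ 2) 0 0 := by
    have := ((hasDerivAt_pow 2 (0 : ℂ)).const_mul (z₁ ^ 2)).const_sub 1
    simpa using this
  have hd : HasDerivAt (fun w : ℂ => 1 - z₂ ^ 2 * w ^ 2) 0 0 := by
    have := ((hasDerivAt_pow 2 (0 : ℂ)).const_mul (z₂ ^ 2)).const_sub 1
    simpa using this
  have hdne : (1 : ℂ) - z₂ ^ 2 * 0 ^ 2 ≠ 0 := by norm_num
  have hq : HasDerivAt (quadQ z₁ z₂) 0 0 := by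
    have := hn.div hd hdne
    have hQ : quadQ z₁ z₂ = (fun w : ℂ => 1 - z₁ ^ 2 * w ^ 2) / (fun w : ℂ => 1 - z₂ ^ 2 * w ^ 2) := rfl
    rw [hQ]
    simpa using this
  have hlog := (hq.clog hslit).const_mul ((2 : ℂ) * (β : ℂ))
  have := hlog.cexp
  have hP : quadPhi z₁ z₂ β = fun x => Complex.exp ((2 * (β : ℂ)) * Complex.log (quadQ z₁ z₂ x)) := rfl
  rw [hP]
  simpa using this

end QuadAux

set_option maxHeartbeats 1000000 in
/-- The developing map of the metric quadrupole (e.g. the Stone–Wales defect), whose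
complexified conformal factor is `ρ_ℂ(z) = 2β log((z-z₁)(z+z₁)/((z-z₂)(z+z₂)))`, is
single-valued (a global primitive of `e^{ρ_ℂ}` exists near infinity) and injective in
a neighborhood of infinity. -/
theorem quadrupole_developing_map_injective_near_infinity (β : ℝ) (z₁ z₂ : ℂ) :
    ∃ R > (0 : ℝ), ∃ f : ℂ → ℂ,
      (∀ z : ℂ, R < ‖z‖ →
        HasDerivAt f
          (Complex.exp ((2 * (β : ℂ)) *
            Complex.log ((z ^ 2 - z₁ ^ 2) / (z ^ 2 - z₂ ^ 2)))) z) ∧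
      ∃ R' : ℝ, R ≤ R' ∧ Set.InjOn f {z : ℂ | R' < ‖z‖} := by
  classical
  set R0 : ℝ := quadR0 z₁ z₂ with hR0def
  have hR0 : 0 < R0 := quadR0_pos z₁ z₂
  have hR04 : 4 ≤ 2 * R0 := by
    have : 0 ≤ max (‖z₁‖) (‖z₂‖) :=
      le_max_of_le_left (norm_nonneg _)
    rw [hR0def]; unfold quadR0; nlinarith
  set φ : ℂ → ℂ := quadPhi z₁ z₂ β with hφdef
  set ρ : NNReal := ⟨R0⁻¹, inv_nonneg.mpr hR0.le⟩ with hρdef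
  have hρpos : 0 < ρ := by
    rw [← NNReal.coe_lt_coe]
    exact inv_pos.mpr hR0
  have hdiff : DifferentiableOn ℂ φ (Metric.closedBall 0 ρ) := by
    intro w hw
    refine (quad_phi_diffAt z₁ z₂ β ?_).differentiableWithinAt
    exact mem_closedBall_zero_iff.mp hw
  obtain ⟨p, hp⟩ : ∃ p, HasFPowerSeriesOnBall φ p 0 ρ :=
    ⟨_, hdiff.hasFPowerSeriesOnBall hρpos⟩
  set a : ℕ → ℂ := fun n => p.coeff n with hadef
  have ha0 : a 0 = 1 := by
    have h := hp.coeff_zero (fun _ => 1)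
    have hφ0 : φ 0 = 1 := quad_phi_zero z₁ z₂ β
    rw [hφ0] at h
    exact h
  have ha1 : a 1 = 0 := by
    have h := hp.hasFPowerSeriesAt.deriv
    have h2 : deriv φ 0 = 0 := (quad_phi_deriv0 z₁ z₂ β).deriv
    exact h.symm.trans h2
  set rr : ℝ := (ρ : ℝ) with hrrdef
  have hrr : 0 < rr := inv_pos.mpr hR0
  have hrrR0 : rr = R0⁻¹ := rfl
  have hsum : Summable fun n => ‖p n‖ * (rr / 2) ^ n := by
    have h1 : ((ρ / 2 : NNReal) : ENNReal) < p.radius := by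
      refine lt_of_lt_of_le ?_ hp.r_le
      exact_mod_cast ENNReal.coe_lt_coe.mpr (NNReal.half_lt_self hρpos.ne')
    have h2 := p.summable_norm_mul_pow h1
    have h3 : ((ρ / 2 : NNReal) : ℝ) = rr / 2 := by push_cast; rfl
    rwa [h3] at h2
  set v : ℕ → ℝ := fun n => ‖p (n + 2)‖ * (rr / 2) ^ n with hvdef
  have hv : Summable v := by
    have h1 : Summable fun n => ‖p (n + 2)‖ * (rr / 2) ^ (n + 2) :=
      (summable_nat_add_iff (f := fun n => ‖p n‖ * (rr / 2) ^ n) 2).mpr hsum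
    have h2 := h1.mul_right (((rr / 2) ^ 2)⁻¹)
    refine h2.congr fun n => ?_
    show ‖p (n + 2)‖ * (rr / 2) ^ (n + 2) * ((rr / 2) ^ 2)⁻¹ = ‖p (n + 2)‖ * (rr / 2) ^ n
    field_simp
    ring
  set B : Set ℂ := Metric.ball (0 : ℂ) (rr / 2) with hBdef
  set G : ℂ → ℂ := fun w => ∑' n : ℕ, (-(a (n + 2)) / ((n : ℂ) + 1)) * w ^ (n + 1)
    with hGdef
  set G' : ℂ → ℂ := fun w => ∑' n : ℕ, (-(a (n + 2))) * w ^ n with hG'def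
  have hterm : ∀ (n : ℕ) (y : ℂ),
      HasDerivAt (fun w => (-(a (n + 2)) / ((n : ℂ) + 1)) * w ^ (n + 1))
        ((-(a (n + 2))) * y ^ n) y := by
    intro n y
    have h := (hasDerivAt_pow (n + 1) y).const_mul (-(a (n + 2)) / ((n : ℂ) + 1))
    refine h.congr_deriv ?_
    have hne : ((n : ℂ) + 1) ≠ 0 := Nat.cast_add_one_ne_zero n
    push_cast
    rw [div_mul_eq_mul_div, div_eq_iff hne]
    ring
  have hbound : ∀ (n : ℕ) (y : ℂ), y ∈ B → ‖(-(a (n + 2))) * y ^ n‖ ≤ v n := by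
    intro n y hy
    have hy' : ‖y‖ ≤ rr / 2 := (mem_ball_zero_iff.mp hy).le
    have hcoef : ‖a (n + 2)‖ = ‖p (n + 2)‖ :=
      (FormalMultilinearSeries.norm_apply_eq_norm_coef).symm
    rw [norm_mul, norm_neg, norm_pow, hcoef]
    exact mul_le_mul le_rfl (pow_le_pow_left₀ (norm_nonneg _) hy' n)
      (pow_nonneg (norm_nonneg _) n) (norm_nonneg _)
  have hG : ∀ w ∈ B, HasDerivAt G (G' w) w := by
    intro w hw
    refine hasDerivAt_tsum_of_isPreconnected hv isOpen_ball
      (convex_ball _ _).isPreconnected (fun n y _ => hterm n y) hbound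
      (mem_ball_self (by positivity)) ?_ hw
    have h0 : (fun n : ℕ => (-(a (n + 2)) / ((n : ℂ) + 1)) * (0 : ℂ) ^ (n + 1)) =
        fun _ => (0 : ℂ) := by
      funext n; simp
    rw [h0]
    exact summable_zero
  have hS : ∀ w : ℂ, ‖w‖ < rr → HasSum (fun n => a n * w ^ n) (φ w) := by
    intro w hww
    have hnn : ‖w‖₊ < ρ := by
      rw [← NNReal.coe_lt_coe]
      simpa using hww
    have hmem : w ∈ EMetric.ball (0 : ℂ) ρ := by
      show edist w 0 < (ρ : ENNReal)
      rw [edist_zero_right]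
      exact_mod_cast ENNReal.coe_lt_coe.mpr hnn
    have h := hp.hasSum hmem
    rw [zero_add] at h
    have he : (fun n => p n fun _ => w) = fun n => a n * w ^ n := by
      funext n
      rw [FormalMultilinearSeries.apply_eq_pow_smul_coeff, smul_eq_mul, mul_comm]
    rwa [he] at h
  have htail : ∀ w : ℂ, ‖w‖ < rr →
      HasSum (fun n => a (n + 2) * w ^ (n + 2)) (φ w - 1) := by
    intro w hww
    have h := (hasSum_nat_add_iff' 2).mpr (hS w hww)
    have hsum2 : (∑ i ∈ Finset.range 2, a i * w ^ i) = 1 := by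
      rw [Finset.sum_range_succ, Finset.sum_range_one, ha0, ha1]
      ring
    rwa [hsum2] at h
  refine ⟨2 * R0, by linarith, fun z => z + G z⁻¹, ?_, ?_⟩
  · intro z hz
    have hz0 : z ≠ 0 := by
      intro h
      rw [h] at hz
      simp at hz
      linarith
    have hzinv : ‖z⁻¹‖ < rr / 2 := by
      rw [norm_inv]
      rw [hrrR0]
      rw [show R0⁻¹ / 2 = (2 * R0)⁻¹ by rw [mul_inv]; ring]
      exact inv_strictAnti₀ (by linarith) hz
    have hwB : z⁻¹ ∈ B := by
      rw [hBdef, mem_ball_zero_iff]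
      exact hzinv
    have hGz : HasDerivAt (fun z : ℂ => G z⁻¹) (G' z⁻¹ * (-(z ^ 2)⁻¹)) z :=
      (hG _ hwB).comp z (hasDerivAt_inv hz0)
    have hf := (hasDerivAt_id z).add hGz
    have hwlt : ‖z⁻¹‖ < rr := lt_of_lt_of_le hzinv (by linarith)
    have hkey : (1 : ℂ) + G' z⁻¹ * (-(z ^ 2)⁻¹) =
        Complex.exp ((2 * (β : ℂ)) *
          Complex.log ((z ^ 2 - z₁ ^ 2) / (z ^ 2 - z₂ ^ 2))) := by
      have hT : (z⁻¹) ^ 2 * ∑' n : ℕ, a (n + 2) * (z⁻¹) ^ n = φ z⁻¹ - 1 := by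
        rw [← tsum_mul_left]
        rw [← (htail z⁻¹ hwlt).tsum_eq]
        exact tsum_congr fun n => by ring
      have hG'e : G' z⁻¹ = -∑' n : ℕ, a (n + 2) * (z⁻¹) ^ n := by
        rw [hG'def, ← tsum_neg]
        exact tsum_congr fun n => by ring
      have hinvpow : (-(z ^ 2)⁻¹ : ℂ) = -(z⁻¹) ^ 2 := by
        rw [← inv_pow]
      rw [hG'e, hinvpow]
      have : -(∑' n : ℕ, a (n + 2) * (z⁻¹) ^ n) * -(z⁻¹) ^ 2 =
          (z⁻¹) ^ 2 * ∑' n : ℕ, a (n + 2) * (z⁻¹) ^ n := by ring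
      rw [this, hT]
      have hφe : φ z⁻¹ = Complex.exp ((2 * (β : ℂ)) *
          Complex.log ((z ^ 2 - z₁ ^ 2) / (z ^ 2 - z₂ ^ 2))) := by
        have habs2 : ‖z₂‖ < ‖z‖ := by
          have h1 : ‖z₂‖ ≤ max (‖z₁‖) (‖z₂‖) :=
            le_max_right _ _
          have h2 : max (‖z₁‖) (‖z₂‖) < 2 * R0 := by
            have hmax0 : (0:ℝ) ≤ max (‖z₁‖) (‖z₂‖) :=
              le_max_of_le_left (norm_nonneg z₁)
            rw [hR0def]; unfold quadR0; nlinarith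
          linarith
        have hzden : z ^ 2 - z₂ ^ 2 ≠ 0 := by
          intro h
          have h2 : z ^ 2 = z₂ ^ 2 := by linear_combination h
          have := congrArg norm h2
          rw [norm_pow, norm_pow] at this
          nlinarith [norm_nonneg z₂, norm_nonneg z]
        have hden' : 1 - z₂ ^ 2 * (z⁻¹) ^ 2 ≠ 0 :=
          quad_den_ne z₁ z₂ (le_of_lt (by rw [← hrrR0]; exact hwlt))
        have hqeq : quadQ z₁ z₂ z⁻¹ = (z ^ 2 - z₁ ^ 2) / (z ^ 2 - z₂ ^ 2) := by
          unfold quadQ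
          rw [div_eq_div_iff hden' hzden]
          field_simp
        rw [hφdef]
        unfold quadPhi
        rw [hqeq]
      rw [hφe]
      ring
    rw [← hkey]
    exact hf
  · -- injectivity
    set K : ℝ := ∑' n, v n with hKdef
    have hK0 : 0 ≤ K := tsum_nonneg fun n => by positivity
    refine ⟨2 * R0 + K + 1, by linarith, ?_⟩
    have hR' : (4 : ℝ) ≤ 2 * R0 + K + 1 := by linarith
    set R' : ℝ := 2 * R0 + K + 1 with hR'def
    have hKR' : K < R' ^ 2 := by nlinarith
    have hnormG' : ∀ w ∈ B, ‖G' w‖ ≤ K := by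
      intro w hw
      have h1 : ∀ n : ℕ, ‖(-(a (n + 2))) * w ^ n‖ ≤ v n := fun n => hbound n w hw
      have h2 : Summable fun n : ℕ => ‖(-(a (n + 2))) * w ^ n‖ :=
        Summable.of_nonneg_of_le (fun n => norm_nonneg _) h1 hv
      calc ‖G' w‖ ≤ ∑' n : ℕ, ‖(-(a (n + 2))) * w ^ n‖ := norm_tsum_le_tsum_norm h2
        _ ≤ K := Summable.tsum_le_tsum h1 h2 hv
    have hlip : ∀ x ∈ B, ∀ y ∈ B, ‖G y - G x‖ ≤ K * ‖y - x‖ := by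
      intro x hx y hy
      exact (convex_ball _ _).norm_image_sub_le_of_norm_hasDerivWithin_le
        (fun w hw => (hG w hw).hasDerivWithinAt) hnormG' hx hy
    intro x hx y hy hfxy
    simp only [Set.mem_setOf_eq] at hx hy
    have hx0 : x ≠ 0 := by
      intro h
      rw [h] at hx
      simp at hx
      linarith
    have hy0 : y ≠ 0 := by
      intro h
      rw [h] at hy
      simp at hy
      linarith
    have hmem : ∀ u : ℂ, R' < ‖u‖ → u⁻¹ ∈ B := by
      intro u hu
      rw [hBdef, mem_ball_zero_iff, norm_inv, hrrR0,
        show R0⁻¹ / 2 = (2 * R0)⁻¹ by rw [mul_inv]; ring]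
      exact inv_strictAnti₀ (by linarith) (by linarith)
    have hxB := hmem x hx
    have hyB := hmem y hy
    have hsub : x - y = G y⁻¹ - G x⁻¹ := by
      have := hfxy
      simp only at this
      linear_combination this
    have h1 : ‖x - y‖ ≤ K * ‖y⁻¹ - x⁻¹‖ := by
      rw [hsub]
      exact hlip _ hxB _ hyB
    have h2 : y⁻¹ - x⁻¹ = (x - y) * (x⁻¹ * y⁻¹) := by
      field_simp
    have h3 : ‖y⁻¹ - x⁻¹‖ = ‖x - y‖ * (‖x‖⁻¹ * ‖y‖⁻¹) := by
      rw [h2, norm_mul, norm_mul, norm_inv, norm_inv]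
    rw [h3] at h1
    by_contra hne
    have hd : 0 < ‖x - y‖ := by
      rw [norm_pos_iff]
      exact sub_ne_zero.mpr hne
    have hax : R' < ‖x‖ := hx
    have hay : R' < ‖y‖ := hy
    have haxp : 0 < ‖x‖ := by linarith
    have hayp : 0 < ‖y‖ := by linarith
    have h5 : ‖x‖⁻¹ * ‖y‖⁻¹ * (‖x‖ * ‖y‖) = 1 := by
      rw [← mul_inv]
      exact inv_mul_cancel₀ (ne_of_gt (mul_pos haxp hayp))
    have h4 : ‖x - y‖ * (‖x‖ * ‖y‖) ≤ K * ‖x - y‖ := by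
      have hh := mul_le_mul_of_nonneg_right h1 (le_of_lt (mul_pos haxp hayp))
      calc ‖x - y‖ * (‖x‖ * ‖y‖) ≤
          K * (‖x - y‖ * (‖x‖⁻¹ * ‖y‖⁻¹)) * (‖x‖ * ‖y‖) := hh
        _ = K * ‖x - y‖ * (‖x‖⁻¹ * ‖y‖⁻¹ * (‖x‖ * ‖y‖)) := by ring
        _ = K * ‖x - y‖ := by rw [h5, mul_one]
    have h6 : R' * R' < ‖x‖ * ‖y‖ := by nlinarith
    have h7 : ‖x - y‖ * (R' * R') < ‖x - y‖ * (‖x‖ * ‖y‖) :=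
      mul_lt_mul_of_pos_left h6 hd
    have h8 : K * ‖x - y‖ < R' ^ 2 * ‖x - y‖ :=
      mul_lt_mul_of_pos_right hKR' hd
    have h9 : R' ^ 2 * ‖x - y‖ = ‖x - y‖ * (R' * R') := by ring
    linarith
end
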